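/- arXiv:1011.3507 — 2 statements merged into one kernel-verified Lean document; each statement's English description precedes it below -/
import Mathlib

section
/- Let C be a triangulated category carrying a bounded weight structure w and a bounded t-structure t satisfying condition (iv) of Theorem 1.1 (for every X ∈ Heart(t) and every i ∈ ℤ there exists a nice weight decomposition of X at level i). Then for every i ∈ ℤ there exist exact functors L_i, R_i : Heart(t) → Heart(t) and natural transformations L_i ⟶ Id_{Heart(t)} ⟶ R_i such that for every X ∈ Heart(t): L_iX ∈ C^{w≤i}, R_iX ∈ C^{w≥i+1}, and the sequence 0 → L_iX → X → R_iX → 0 is a short exact sequence in Heart(t). -/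
open CategoryTheory CategoryTheory.Limits CategoryTheory.Pretriangulated

universe v u

namespace WT

variable (C : Type u) [Category.{v} C] [Preadditive C] [HasZeroObject C]
  [HasShift C ℤ] [∀ n : ℤ, (shiftFunctor C n).Additive] [Pretriangulated C]

/-- `D ⊥ E`: every morphism from an object of `D` to an object of `E` vanishes. -/
def Perp (D E : Set C) : Prop :=
  ∀ ⦃X : C⦄, X ∈ D → ∀ ⦃Y : C⦄, Y ∈ E → ∀ f : X ⟶ Y, f = 0

/-- The shift `D[n]` of a class of objects: objects isomorphic to `Y⟦n⟧` for `Y ∈ D`. -/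
def shiftClass (D : Set C) (n : ℤ) : Set C :=
  {X : C | ∃ Y ∈ D, Nonempty (X ≅ (Y⟦n⟧ : C))}

/-- A class of objects is extension-stable if for any distinguished triangle
`A → B → C' → A⟦1⟧` with `A, C' ∈ D` one has `B ∈ D`. -/
def ExtensionStable (D : Set C) : Prop :=
  ∀ (T : Triangle C), T ∈ (distTriang C) → T.obj₁ ∈ D → T.obj₃ ∈ D → T.obj₂ ∈ D

/-- The envelope of a class of objects: the smallest extension-stable class containing it. -/
def envelope (F : Set C) : Set C :=
  ⋂₀ {D : Set C | ExtensionStable C D ∧ F ⊆ D}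

/-- A class of objects corresponding to a strictly full triangulated subcategory. -/
structure IsTriangulatedClass (S : Set C) : Prop where
  isoClosed : ∀ ⦃X Y : C⦄, (X ≅ Y) → X ∈ S → Y ∈ S
  shift : ∀ (n : ℤ) (X : C), X ∈ S → (X⟦n⟧ : C) ∈ S
  ext : ExtensionStable C S

/-- The smallest strictly full triangulated subcategory (as a class of objects)
containing a given class of objects. -/
def triangulatedHull (F : Set C) : Set C :=
  ⋂₀ {S : Set C | IsTriangulatedClass C S ∧ F ⊆ S}

/-- A family `(A i)` of classes of objects is semi-orthogonal if
`Hom(X, Y⟦s⟧) = 0` for `X ∈ A i`, `Y ∈ A j` whenever `s < 0` or `s > i - j`. -/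
def SemiOrthogonal (A : ℤ → Set C) : Prop :=
  ∀ i j s : ℤ, (s < 0 ∨ i - j < s) →
    ∀ ⦃X : C⦄, X ∈ A i → ∀ ⦃Y : C⦄, Y ∈ A j → ∀ f : X ⟶ (Y⟦s⟧ : C), f = 0

/-- Strong semi-orthogonality: semi-orthogonality together with `A i ⊥ A j` for `i ≠ j`. -/
def StronglySemiOrthogonal (A : ℤ → Set C) : Prop :=
  SemiOrthogonal C A ∧ ∀ i j : ℤ, i ≠ j → Perp C (A i) (A j)

/-- The family `(A i)` is generating: the smallest strictly full triangulated subcategory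
containing all the `A i` is the whole category. -/
def IsGenerating (A : ℤ → Set C) : Prop :=
  ∀ X : C, X ∈ triangulatedHull C (⋃ i : ℤ, A i)

end WT

namespace WT

/-- A category is abelian semi-simple if it carries an abelian structure for which every
object is a finite direct sum of simple objects. -/
def IsSemisimpleAbelian (B : Type*) [Category B] : Prop :=
  ∃ inst : Abelian B,
    haveI := inst
    haveI : HasFiniteBiproducts B := Abelian.hasFiniteBiproducts
    ∀ X : B, ∃ (n : ℕ) (f : Fin n → B),
      (∀ l, Simple (f l)) ∧ Nonempty (X ≅ ⨁ f)

variable (C : Type u) [Category.{v} C] [Preadditive C] [HasZeroObject C]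
  [HasShift C ℤ] [∀ n : ℤ, (shiftFunctor C n).Additive] [Pretriangulated C]

/-- A bounded t-structure, given by the classes `C^{t≤0}` and `C^{t≥0}`. -/
structure BoundedTStructure where
  le : Set C
  ge : Set C
  le_shift : ∀ X ∈ le, (X⟦(1 : ℤ)⟧ : C) ∈ le
  ge_shift : ∀ X ∈ ge, (X⟦(-1 : ℤ)⟧ : C) ∈ ge
  orth : ∀ X ∈ le, ∀ Y ∈ ge, ∀ f : X ⟶ (Y⟦(-1 : ℤ)⟧ : C), f = 0
  decomp : ∀ X : C, ∃ (A B : C) (f : A ⟶ X) (g : X ⟶ B) (h : B ⟶ (A⟦(1 : ℤ)⟧ : C)),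
    Triangle.mk f g h ∈ (distTriang C) ∧ A ∈ le ∧ B ∈ shiftClass C ge (-1)
  bounded_le : ∀ X : C, ∃ i : ℤ, X ∈ shiftClass C le (-i)
  bounded_ge : ∀ X : C, ∃ j : ℤ, X ∈ shiftClass C ge (-j)

variable {C}

/-- `C^{t≤i} := C^{t≤0}[-i]`. -/
def BoundedTStructure.tle (t : BoundedTStructure C) (i : ℤ) : Set C :=
  shiftClass C t.le (-i)

/-- `C^{t≥i} := C^{t≥0}[-i]`. -/
def BoundedTStructure.tge (t : BoundedTStructure C) (i : ℤ) : Set C :=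
  shiftClass C t.ge (-i)

/-- The heart of a t-structure. -/
def BoundedTStructure.heart (t : BoundedTStructure C) : Set C :=
  t.le ∩ t.ge

variable (C)

/-- A bounded weight structure (sign convention of the paper), given by the classes
`C^{w≤0}` and `C^{w≥0}`. -/
structure BoundedWeightStructure [HasBinaryBiproducts C] where
  le : Set C
  ge : Set C
  le_sum : ∀ X ∈ le, ∀ Y ∈ le, (X ⊞ Y : C) ∈ le
  ge_sum : ∀ X ∈ ge, ∀ Y ∈ ge, (X ⊞ Y : C) ∈ ge
  le_retract : ∀ ⦃X Y : C⦄, (∃ (s : X ⟶ Y) (r : Y ⟶ X), s ≫ r = 𝟙 X) → Y ∈ le → X ∈ le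
  ge_retract : ∀ ⦃X Y : C⦄, (∃ (s : X ⟶ Y) (r : Y ⟶ X), s ≫ r = 𝟙 X) → Y ∈ ge → X ∈ ge
  le_shift : ∀ X ∈ le, (X⟦(-1 : ℤ)⟧ : C) ∈ le
  ge_shift : ∀ X ∈ ge, (X⟦(1 : ℤ)⟧ : C) ∈ ge
  orth : ∀ X ∈ le, ∀ Y ∈ ge, ∀ f : X ⟶ (Y⟦(1 : ℤ)⟧ : C), f = 0
  decomp : ∀ X : C, ∃ (A B : C) (f : A ⟶ X) (g : X ⟶ B) (h : B ⟶ (A⟦(1 : ℤ)⟧ : C)),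
    Triangle.mk f g h ∈ (distTriang C) ∧ A ∈ le ∧ B ∈ shiftClass C ge 1
  bounded_le : ∀ X : C, ∃ i : ℤ, X ∈ shiftClass C le i
  bounded_ge : ∀ X : C, ∃ j : ℤ, X ∈ shiftClass C ge j

variable {C} [HasBinaryBiproducts C]

/-- `C^{w≤i} := C^{w≤0}[i]`. -/
def BoundedWeightStructure.wle (w : BoundedWeightStructure C) (i : ℤ) : Set C :=
  shiftClass C w.le i

/-- `C^{w≥i} := C^{w≥0}[i]`. -/
def BoundedWeightStructure.wge (w : BoundedWeightStructure C) (i : ℤ) : Set C :=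
  shiftClass C w.ge i

/-- A nice weight decomposition of `X` at level `i`: a weight decomposition
`w_{≤i}X → X → w_{≥i+1}X` all three of whose terms lie in the heart of `t`. -/
def NiceDecomposition (w : BoundedWeightStructure C) (t : BoundedTStructure C)
    (i : ℤ) (X : C) : Prop :=
  ∃ (A B : C) (f : A ⟶ X) (g : X ⟶ B) (h : B ⟶ (A⟦(1 : ℤ)⟧ : C)),
    Triangle.mk f g h ∈ (distTriang C) ∧ A ∈ w.wle i ∧ B ∈ w.wge (i + 1) ∧
      A ∈ t.heart ∧ X ∈ t.heart ∧ B ∈ t.heart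

/-- Condition (iv) of Theorem 1.1: every object of the heart of `t` admits a nice
weight decomposition at every level. -/
def ConditionIV (w : BoundedWeightStructure C) (t : BoundedTStructure C) : Prop :=
  ∀ X ∈ t.heart, ∀ i : ℤ, NiceDecomposition w t i X

/-- The heart of `t` as a full subcategory. -/
abbrev Heart (t : BoundedTStructure C) := ObjectProperty.FullSubcategory (fun X : C => X ∈ t.heart)

/-- A morphism in the heart, viewed as a morphism of the ambient category. -/
def homC {P : C → Prop} {X Y : ObjectProperty.FullSubcategory P} (f : X ⟶ Y) : X.obj ⟶ Y.obj := f.hom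

/-- `0 → X → Y → Z → 0` is a short exact sequence in the heart of `t`; equivalently,
all three objects lie in the heart and the pair of morphisms extends to a
distinguished triangle. -/
def HeartSES (t : BoundedTStructure C) {X Y Z : C} (f : X ⟶ Y) (g : Y ⟶ Z) : Prop :=
  X ∈ t.heart ∧ Y ∈ t.heart ∧ Z ∈ t.heart ∧
    ∃ h : Z ⟶ (X⟦(1 : ℤ)⟧ : C), Triangle.mk f g h ∈ (distTriang C)

/-- A functor from the heart to itself is exact if it preserves short exact sequences. -/
def HeartExact (t : BoundedTStructure C) (F : Heart t ⥤ Heart t) : Prop :=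
  ∀ (X Y Z : Heart t) (f : X ⟶ Y) (g : Y ⟶ Z),
    HeartSES t (homC f) (homC g) → HeartSES t (homC (F.map f)) (homC (F.map g))

end WT


namespace WT

variable (C : Type u) [Category.{v} C] [Preadditive C] [HasZeroObject C]
  [HasShift C ℤ] [∀ n : ℤ, (shiftFunctor C n).Additive] [Pretriangulated C]
variable [HasBinaryBiproducts C]

section Aux
set_option linter.unusedSectionVars false

variable {C}
variable (w : BoundedWeightStructure C) (t : BoundedTStructure C)

/-- transfer a Hom-vanishing through the shift by 1 -/
lemma shift1_zero {P V : C} (h : ∀ g : P ⟶ V, g = 0) (g : (P⟦(1:ℤ)⟧ : C) ⟶ (V⟦(1:ℤ)⟧ : C)) :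
    g = 0 := by
  obtain ⟨g₀, rfl⟩ := (shiftFunctor C (1:ℤ)).map_surjective g
  rw [h g₀, Functor.map_zero]

lemma BWS_orth_shift : ∀ n : ℤ, 1 ≤ n → ∀ (G : C), G ∈ w.ge → ∀ {P : C}, P ∈ w.le →
    ∀ f : P ⟶ (G⟦n⟧ : C), f = 0 := by
  refine Int.le_induction ?_ ?_
  · exact fun G hG {P} hP f => w.orth P hP G hG f
  · intro n hn ih G hG P hP f
    have e : (G⟦n+1⟧ : C) ≅ ((G⟦(1:ℤ)⟧ : C)⟦n⟧ : C) := (shiftFunctorAdd' C (1:ℤ) n (n+1) (by ring)).app G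
    have h0 : f ≫ e.hom = 0 := ih (G⟦(1:ℤ)⟧) (w.ge_shift G hG) hP (f ≫ e.hom)
    have : f = (f ≫ e.hom) ≫ e.inv := by simp
    rw [this, h0, zero_comp]

/-- the main weight-structure orthogonality: `Hom(C^{w≤a}, C^{w≥b}) = 0` for `a < b`. -/
lemma BWS_orth {a b : ℤ} (hab : a < b) {V B : C} (hV : V ∈ w.wle a) (hB : B ∈ w.wge b)
    (f : V ⟶ B) : f = 0 := by
  obtain ⟨P, hP, ⟨eV⟩⟩ := hV
  obtain ⟨G, hG, ⟨eB⟩⟩ := hB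
  have hf' : ∀ f' : (P⟦a⟧ : C) ⟶ (G⟦b⟧ : C), f' = 0 := by
    intro f'
    have e1 : ((P⟦a⟧ : C)⟦-a⟧ : C) ≅ P := (shiftFunctorCompIsoId C a (-a) (add_neg_cancel a)).app P
    have e2 : ((G⟦b⟧ : C)⟦-a⟧ : C) ≅ (G⟦b + -a⟧ : C) := ((shiftFunctorAdd' C b (-a) (b + -a) rfl).app G).symm
    have h0 : e1.inv ≫ (shiftFunctor C (-a)).map f' ≫ e2.hom = 0 :=
      BWS_orth_shift w (b + -a) (by omega) G hG hP _
    have h1 : (shiftFunctor C (-a)).map f' = e1.hom ≫ (e1.inv ≫ (shiftFunctor C (-a)).map f' ≫ e2.hom) ≫ e2.inv := by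
      simp
    rw [h0] at h1
    simp only [zero_comp, comp_zero] at h1
    rwa [(shiftFunctor C (-a)).map_eq_zero_iff] at h1
  have h2 : f = eV.hom ≫ (eV.inv ≫ f ≫ eB.hom) ≫ eB.inv := by simp
  rw [h2, hf' (eV.inv ≫ f ≫ eB.hom), zero_comp, comp_zero]

lemma wge_shift1 {B : C} {j : ℤ} (hB : B ∈ w.wge j) : (B⟦(1:ℤ)⟧ : C) ∈ w.wge (j+1) := by
  obtain ⟨G, hG, ⟨e⟩⟩ := hB
  exact ⟨G, hG, ⟨(shiftFunctor C (1:ℤ)).mapIso e ≪≫ ((shiftFunctorAdd' C j (1:ℤ) (j+1) rfl).app G).symm⟩⟩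

/-- t-structure orthogonality, negative shifts -/
lemma BTS_orth_shift : ∀ n : ℤ, 1 ≤ n → ∀ (G : C), G ∈ t.ge → ∀ {P : C}, P ∈ t.le →
    ∀ f : P ⟶ (G⟦-n⟧ : C), f = 0 := by
  refine Int.le_induction ?_ ?_
  · exact fun G hG {P} hP f => t.orth P hP G hG f
  · intro n hn ih G hG P hP f
    have e : (G⟦-(n+1)⟧ : C) ≅ ((G⟦(-1:ℤ)⟧ : C)⟦-n⟧ : C) :=
      (shiftFunctorAdd' C (-1:ℤ) (-n) (-(n+1)) (by ring)).app G
    have h0 : f ≫ e.hom = 0 := ih (G⟦(-1:ℤ)⟧) (t.ge_shift G hG) hP (f ≫ e.hom)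
    have : f = (f ≫ e.hom) ≫ e.inv := by simp
    rw [this, h0, zero_comp]

/-- t-structure orthogonality in the form `Hom(P⟦1⟧, G) = 0` for `P ∈ le`, `G ∈ ge`. -/
lemma BTS_orth1 {P G : C} (hP : P ∈ t.le) (hG : G ∈ t.ge) (f : (P⟦(1:ℤ)⟧ : C) ⟶ G) : f = 0 := by
  set e := (shiftEquiv C (1:ℤ)).toAdjunction.homEquiv P G with he
  have h : e f = 0 := t.orth P hP G hG (e f)
  have : f = e.symm 0 := by rw [← h]; exact (e.symm_apply_apply f).symm
  rw [this, Adjunction.homEquiv_counit, Functor.map_zero, zero_comp]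
  rfl

/-- cancellation of postcomposition with the first map of a distinguished triangle
whose third object is in `t.ge`, for maps from an object of `t.le`. -/
lemma cancel_lift {A X B : C} {a : A ⟶ X} {b : X ⟶ B} {d : B ⟶ (A⟦(1:ℤ)⟧ : C)}
    (hD : Triangle.mk a b d ∈ distTriang C) {W : C} (hW : W ∈ t.le) (hB : B ∈ t.ge)
    {ψ ψ' : W ⟶ A} (h : ψ ≫ a = ψ' ≫ a) : ψ = ψ' := by
  have h0 : (ψ - ψ') ≫ a = 0 := by rw [Preadditive.sub_comp, h, sub_self]
  have hD2 := rot_of_distTriang _ (rot_of_distTriang _ hD)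
  obtain ⟨g, hg⟩ : ∃ g : (W⟦(1:ℤ)⟧ : C) ⟶ B, (shiftFunctor C (1:ℤ)).map (ψ - ψ') = g ≫ d :=
    Triangle.coyoneda_exact₂ _ hD2 ((shiftFunctor C (1:ℤ)).map (ψ - ψ'))
    (by
      dsimp only [Triangle.mk, Triangle.rotate, Iso.refl]
      rw [Preadditive.comp_neg, ← Functor.map_comp, h0, Functor.map_zero, neg_zero]
      rfl)
  have hg0 : g = 0 := BTS_orth1 t hW hB g
  rw [hg0, zero_comp, (shiftFunctor C (1:ℤ)).map_eq_zero_iff, sub_eq_zero] at hg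
  exact hg

/-- cancellation of precomposition with the second map of a distinguished triangle,
given the vanishing of `Hom(A⟦1⟧, V)`. -/
lemma cancel_desc {A X B : C} {a : A ⟶ X} {b : X ⟶ B} {d : B ⟶ (A⟦(1:ℤ)⟧ : C)}
    (hD : Triangle.mk a b d ∈ distTriang C) {V : C} (hAV : ∀ g : (A⟦(1:ℤ)⟧ : C) ⟶ V, g = 0)
    {ψ ψ' : B ⟶ V} (h : b ≫ ψ = b ≫ ψ') : ψ = ψ' := by
  have h0 : b ≫ (ψ - ψ') = 0 := by rw [Preadditive.comp_sub, h, sub_self]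
  obtain ⟨g, hg⟩ : ∃ g : (A⟦(1:ℤ)⟧ : C) ⟶ V, ψ - ψ' = d ≫ g :=
    Triangle.yoneda_exact₃ _ hD (ψ - ψ') h0
  rw [hAV g, comp_zero, sub_eq_zero] at hg
  exact hg

/-- cancellation of precomposition with the shifted second map of a distinguished
triangle, given the vanishing of `Hom(A⟦1⟧⟦1⟧, V)`. -/
lemma cancel_shift_desc {A X B : C} {a : A ⟶ X} {b : X ⟶ B} {d : B ⟶ (A⟦(1:ℤ)⟧ : C)}
    (hD : Triangle.mk a b d ∈ distTriang C) {V : C}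
    (hV : ∀ g : (((A⟦(1:ℤ)⟧ : C))⟦(1:ℤ)⟧ : C) ⟶ V, g = 0)
    {φ φ' : (B⟦(1:ℤ)⟧ : C) ⟶ V}
    (h : (shiftFunctor C (1:ℤ)).map b ≫ φ = (shiftFunctor C (1:ℤ)).map b ≫ φ') : φ = φ' := by
  have h0 : (shiftFunctor C (1:ℤ)).map b ≫ (φ - φ') = 0 := by
    rw [Preadditive.comp_sub, h, sub_self]
  obtain ⟨g, hg⟩ : ∃ g : (((A⟦(1:ℤ)⟧ : C))⟦(1:ℤ)⟧ : C) ⟶ V,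
      φ - φ' = (-((shiftFunctor C (1:ℤ)).map d)) ≫ g := by
    refine Triangle.yoneda_exact₃ _
      (rot_of_distTriang _ (rot_of_distTriang _ (rot_of_distTriang _ hD))) (φ - φ') ?_
    dsimp only [Triangle.mk, Triangle.rotate, Iso.refl]
    rw [Preadditive.neg_comp, h0, neg_zero]
    rfl
  rw [hV g, comp_zero, sub_eq_zero] at hg
  exact hg

/-- existence of descents along the second map of a distinguished triangle. -/
lemma desc_ex {A X B : C} {a : A ⟶ X} {b : X ⟶ B} {d : B ⟶ (A⟦(1:ℤ)⟧ : C)}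
    (hD : Triangle.mk a b d ∈ distTriang C) {V : C} (φ : X ⟶ V) (h : a ≫ φ = 0) :
    ∃ ψ : B ⟶ V, b ≫ ψ = φ := by
  obtain ⟨g, hg⟩ := Triangle.yoneda_exact₂ _ hD φ h
  exact ⟨g, hg.symm⟩

/-- existence of lifts along the first map of a distinguished triangle. -/
lemma lift_ex {A X B : C} {a : A ⟶ X} {b : X ⟶ B} {d : B ⟶ (A⟦(1:ℤ)⟧ : C)}
    (hD : Triangle.mk a b d ∈ distTriang C) {W : C} (φ : W ⟶ X) (h : φ ≫ b = 0) :
    ∃ ψ : W ⟶ A, ψ ≫ a = φ := by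
  obtain ⟨g, hg⟩ := Triangle.coyoneda_exact₂ _ hD φ h
  exact ⟨g, hg.symm⟩

/-- Key lemma: the chosen lifts of a distinguished triangle of heart objects to the
`w≤i`-parts of nice weight decompositions again form a distinguished triangle. -/
lemma L_dist (i : ℤ)
    {X Y Z : C} {u : X ⟶ Y} {v : Y ⟶ Z} {δ : Z ⟶ (X⟦(1:ℤ)⟧ : C)}
    (hT : Triangle.mk u v δ ∈ distTriang C) (hZge : Z ∈ t.ge)
    {AX BX : C} {aX : AX ⟶ X} {bX : X ⟶ BX} {dX : BX ⟶ (AX⟦(1:ℤ)⟧ : C)}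
    (hDX : Triangle.mk aX bX dX ∈ distTriang C)
    (hAXw : AX ∈ w.wle i) (hAXle : AX ∈ t.le) (hBXw : BX ∈ w.wge (i+1)) (hBXge : BX ∈ t.ge)
    {AY BY : C} {aY : AY ⟶ Y} {bY : Y ⟶ BY} {dY : BY ⟶ (AY⟦(1:ℤ)⟧ : C)}
    (hDY : Triangle.mk aY bY dY ∈ distTriang C)
    (hAYw : AY ∈ w.wle i) (hAYle : AY ∈ t.le) (hAYge : AY ∈ t.ge)
    (hBYw : BY ∈ w.wge (i+1)) (hBYge : BY ∈ t.ge)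
    {AZ BZ : C} {aZ : AZ ⟶ Z} {bZ : Z ⟶ BZ} {dZ : BZ ⟶ (AZ⟦(1:ℤ)⟧ : C)}
    (hDZ : Triangle.mk aZ bZ dZ ∈ distTriang C)
    (hAZw : AZ ∈ w.wle i) (hAZle : AZ ∈ t.le) (hBZw : BZ ∈ w.wge (i+1)) (hBZge : BZ ∈ t.ge)
    {Lu : AX ⟶ AY} (hLu : Lu ≫ aY = aX ≫ u)
    {Lv : AY ⟶ AZ} (hLv : Lv ≫ aZ = aY ≫ v) :
    ∃ h : AZ ⟶ (AX⟦(1:ℤ)⟧ : C), Triangle.mk Lu Lv h ∈ distTriang C := by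
  have huv : u ≫ v = 0 := comp_distTriang_mor_zero₁₂ _ hT
  have hδu : δ ≫ (shiftFunctor C (1:ℤ)).map u = 0 := comp_distTriang_mor_zero₃₁ _ hT
  -- the connecting map h
  have hobs : (aZ ≫ δ) ≫ (shiftFunctor C (1:ℤ)).map bX = 0 :=
    BWS_orth w (show i < i + 1 + 1 by omega) hAZw (wge_shift1 w hBXw) _
  obtain ⟨g0, hg0⟩ : ∃ g : AZ ⟶ (AX⟦(1:ℤ)⟧ : C),
      aZ ≫ δ = g ≫ (-((shiftFunctor C (1:ℤ)).map aX)) :=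
    Triangle.coyoneda_exact₁ _ (rot_of_distTriang _ hDX) (aZ ≫ δ) hobs
  set h : AZ ⟶ (AX⟦(1:ℤ)⟧ : C) := -g0 with hhdef
  have hh : h ≫ (shiftFunctor C (1:ℤ)).map aX = aZ ≫ δ := by
    rw [hhdef, Preadditive.neg_comp, hg0, Preadditive.comp_neg]
  -- the cone of Lu
  obtain ⟨Q, p, r, hQ⟩ := distinguished_cocone_triangle Lu
  have hLup : Lu ≫ p = 0 := comp_distTriang_mor_zero₁₂ _ hQ
  have hpr : p ≫ r = 0 := comp_distTriang_mor_zero₂₃ _ hQ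
  have hrLu : r ≫ (shiftFunctor C (1:ℤ)).map Lu = 0 := comp_distTriang_mor_zero₃₁ _ hQ
  obtain ⟨c, hc₁, hc₂⟩ : ∃ c : Q ⟶ Z,
      p ≫ c = aY ≫ v ∧ r ≫ (shiftFunctor C (1:ℤ)).map aX = c ≫ δ :=
    complete_distinguished_triangle_morphism (Triangle.mk Lu p r) (Triangle.mk u v δ)
      hQ hT aX aY hLu
  -- vanishing of maps out of Q
  have homQ : ∀ (V : C), (∀ g : AY ⟶ V, g = 0) → (∀ g : (AX⟦(1:ℤ)⟧ : C) ⟶ V, g = 0) →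
      ∀ φ : Q ⟶ V, φ = 0 := by
    intro V h1 h2 φ
    obtain ⟨g, hg⟩ : ∃ g : (AX⟦(1:ℤ)⟧ : C) ⟶ V, φ = r ≫ g :=
      Triangle.yoneda_exact₃ _ hQ φ (h1 (p ≫ φ))
    rw [hg, h2 g, comp_zero]
  have homQBZ : ∀ φ : Q ⟶ BZ, φ = 0 :=
    homQ BZ (fun g => BWS_orth w (by omega) hAYw hBZw g) (fun g => BTS_orth1 t hAXle hBZge g)
  have homQBX : ∀ φ : Q ⟶ BX, φ = 0 :=
    homQ BX (fun g => BWS_orth w (by omega) hAYw hBXw g) (fun g => BTS_orth1 t hAXle hBXge g)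
  -- the comparison map tQ : Q ⟶ AZ
  obtain ⟨tQ, htQ⟩ : ∃ ψ : Q ⟶ AZ, ψ ≫ aZ = c := lift_ex hDZ c (homQBZ _)
  have hpt : p ≫ tQ = Lv := by
    refine cancel_lift t hDZ hAYle hBZge ?_
    rw [Category.assoc, htQ, hc₁, hLv]
  have hth : tQ ≫ h = r := by
    have hdiff : (tQ ≫ h - r) ≫ (shiftFunctor C (1:ℤ)).map aX = 0 := by
      rw [Preadditive.sub_comp, Category.assoc, hh, ← Category.assoc, htQ, ← hc₂, sub_self]
    obtain ⟨g, hg⟩ : ∃ g : Q ⟶ BX, tQ ≫ h - r = g ≫ dX :=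
      Triangle.coyoneda_exact₂ _ (rot_of_distTriang _ (rot_of_distTriang _ hDX))
        (tQ ≫ h - r) (by dsimp only [Triangle.mk, Triangle.rotate, Iso.refl]; rw [Preadditive.comp_neg, hdiff, neg_zero]; rfl)
    rw [homQBX g, zero_comp, sub_eq_zero] at hg
    exact hg
  -- the section s
  have hhLu : h ≫ (shiftFunctor C (1:ℤ)).map Lu = 0 := by
    have e1 : (h ≫ (shiftFunctor C (1:ℤ)).map Lu) ≫ (shiftFunctor C (1:ℤ)).map aY = 0 := by
      rw [Category.assoc, ← Functor.map_comp, hLu, Functor.map_comp, ← Category.assoc, hh,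
        Category.assoc, hδu, comp_zero]
    obtain ⟨g, hg⟩ : ∃ g : AZ ⟶ BY, h ≫ (shiftFunctor C (1:ℤ)).map Lu = g ≫ dY :=
      Triangle.coyoneda_exact₂ _ (rot_of_distTriang _ (rot_of_distTriang _ hDY))
        (h ≫ (shiftFunctor C (1:ℤ)).map Lu) (by dsimp only [Triangle.mk, Triangle.rotate, Iso.refl]; rw [Preadditive.comp_neg, e1, neg_zero]; rfl)
    rw [BWS_orth w (by omega) hAZw hBYw g, zero_comp] at hg
    exact hg
  obtain ⟨s₀, hs₀⟩ : ∃ s₀ : AZ ⟶ Q, h = s₀ ≫ r :=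
    Triangle.coyoneda_exact₁ _ hQ h hhLu
  have hρh : (s₀ ≫ tQ - 𝟙 AZ) ≫ h = 0 := by
    rw [Preadditive.sub_comp, Category.assoc, hth, Category.id_comp, ← hs₀, sub_self]
  have hρδ : ((s₀ ≫ tQ - 𝟙 AZ) ≫ aZ) ≫ δ = 0 := by
    rw [Category.assoc, ← hh, ← Category.assoc, hρh, zero_comp]
  obtain ⟨κ, hκ⟩ : ∃ κ : AZ ⟶ Y, (s₀ ≫ tQ - 𝟙 AZ) ≫ aZ = κ ≫ v :=
    Triangle.coyoneda_exact₃ _ hT ((s₀ ≫ tQ - 𝟙 AZ) ≫ aZ) hρδ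
  obtain ⟨σ, hσ⟩ : ∃ σ : AZ ⟶ AY, σ ≫ aY = κ :=
    lift_ex hDY κ (BWS_orth w (by omega) hAZw hBYw _)
  have hρLv : s₀ ≫ tQ - 𝟙 AZ = σ ≫ Lv := by
    refine cancel_lift t hDZ hAZle hBZge ?_
    rw [hκ, Category.assoc, hLv, ← Category.assoc, hσ]
  have hst : (s₀ - σ ≫ p) ≫ tQ = 𝟙 AZ := by
    rw [Preadditive.sub_comp, Category.assoc, hpt, ← hρLv, sub_sub_cancel]
  -- injectivity: any endomorphism of Q killed by tQ vanishes
  have injQ : ∀ θ : Q ⟶ Q, θ ≫ tQ = 0 → θ = 0 := by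
    intro θ hθ
    have hφ'r : (p ≫ θ) ≫ r = 0 := by
      rw [← hth]
      simp only [Category.assoc]
      rw [← Category.assoc θ tQ h, hθ, zero_comp, comp_zero]
    obtain ⟨ψ, hψ⟩ : ∃ ψ : AY ⟶ AY, p ≫ θ = ψ ≫ p :=
      Triangle.coyoneda_exact₃ _ hQ (p ≫ θ) hφ'r
    have hψLv : ψ ≫ Lv = 0 := by
      rw [← hpt, ← Category.assoc, ← hψ, Category.assoc, hθ, comp_zero]
    have h3 : (ψ ≫ aY) ≫ v = 0 := by
      rw [Category.assoc, ← hLv, ← Category.assoc, hψLv, zero_comp]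
    obtain ⟨χ, hχ⟩ : ∃ χ : AY ⟶ X, ψ ≫ aY = χ ≫ u :=
      Triangle.coyoneda_exact₂ _ hT (ψ ≫ aY) h3
    obtain ⟨ξ, hξ⟩ : ∃ ξ : AY ⟶ AX, ξ ≫ aX = χ :=
      lift_ex hDX χ (BWS_orth w (by omega) hAYw hBXw _)
    have hψLu : ψ = ξ ≫ Lu := by
      refine cancel_lift t hDY hAYle hBYge ?_
      rw [hχ, Category.assoc, hLu, ← Category.assoc, hξ]
    have hpθ : p ≫ θ = 0 := by
      rw [hψ, hψLu, Category.assoc, hLup, comp_zero]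
    obtain ⟨χ', hχ'⟩ : ∃ χ' : (AX⟦(1:ℤ)⟧ : C) ⟶ Q, θ = r ≫ χ' :=
      Triangle.yoneda_exact₃ _ hQ θ hpθ
    have homA1Q : ∀ φ : (AX⟦(1:ℤ)⟧ : C) ⟶ Q, φ = 0 := by
      intro φ
      have hζ : (φ ≫ r) ≫ (shiftFunctor C (1:ℤ)).map Lu = 0 := by
        rw [Category.assoc, hrLu, comp_zero]
      obtain ⟨ζ₀, hζ₀⟩ := (shiftFunctor C (1:ℤ)).map_surjective (φ ≫ r)
      have hζLu : ζ₀ ≫ Lu = 0 := by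
        rw [← (shiftFunctor C (1:ℤ)).map_eq_zero_iff, Functor.map_comp, hζ₀, hζ]
      have h5 : (ζ₀ ≫ aX) ≫ u = 0 := by
        rw [Category.assoc, ← hLu, ← Category.assoc, hζLu, zero_comp]
      obtain ⟨μ, hμ⟩ : ∃ μ : (AX⟦(1:ℤ)⟧ : C) ⟶ Z,
          (shiftFunctor C (1:ℤ)).map (ζ₀ ≫ aX) = μ ≫ δ :=
        Triangle.coyoneda_exact₂ _ (rot_of_distTriang _ (rot_of_distTriang _ hT))
          ((shiftFunctor C (1:ℤ)).map (ζ₀ ≫ aX))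
          (by dsimp only [Triangle.mk, Triangle.rotate, Iso.refl]; rw [Preadditive.comp_neg, ← Functor.map_comp, h5, Functor.map_zero, neg_zero]; rfl)
      rw [BTS_orth1 t hAXle hZge μ, zero_comp, (shiftFunctor C (1:ℤ)).map_eq_zero_iff] at hμ
      have hζ00 : ζ₀ = 0 := by
        refine cancel_lift t hDX hAXle hBXge ?_
        rw [hμ, zero_comp]
      have hφr : φ ≫ r = 0 := by rw [← hζ₀, hζ00, Functor.map_zero]
      obtain ⟨η, hη⟩ : ∃ η : (AX⟦(1:ℤ)⟧ : C) ⟶ AY, φ = η ≫ p :=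
        Triangle.coyoneda_exact₃ _ hQ φ hφr
      rw [BTS_orth1 t hAXle hAYge η, zero_comp] at hη
      exact hη
    rw [hχ', homA1Q χ', comp_zero]
  have hts : tQ ≫ (s₀ - σ ≫ p) = 𝟙 Q := by
    have h0 : (tQ ≫ (s₀ - σ ≫ p) - 𝟙 Q) ≫ tQ = 0 := by
      rw [Preadditive.sub_comp, Category.assoc, hst, Category.comp_id, Category.id_comp, sub_self]
    have h1 := injQ _ h0
    rwa [sub_eq_zero] at h1
  refine ⟨h, ?_⟩
  refine isomorphic_distinguished _ hQ _ ?_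
  refine Triangle.isoMk _ _ (Iso.refl _) (Iso.refl _)
    (⟨s₀ - σ ≫ p, tQ, hst, hts⟩ : AZ ≅ Q) ?_ ?_ ?_
  · dsimp only [Triangle.mk, Triangle.rotate, Iso.refl]; rw [Category.comp_id, Category.id_comp]
  · dsimp only [Triangle.mk, Triangle.rotate, Iso.refl]
    rw [← hpt, Category.assoc, hts, Category.comp_id, Category.id_comp]
  · dsimp only [Triangle.mk, Triangle.rotate, Iso.refl]
    rw [(shiftFunctor C (1:ℤ)).map_id, Category.comp_id, ← hth, ← Category.assoc, hst,
      Category.id_comp]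


/-- Key lemma: the chosen descents of a distinguished triangle of heart objects to the
`w≥i+1`-parts of nice weight decompositions again form a distinguished triangle. -/
lemma R_dist (i : ℤ)
    {X Y Z : C} {u : X ⟶ Y} {v : Y ⟶ Z} {δ : Z ⟶ (X⟦(1:ℤ)⟧ : C)}
    (hT : Triangle.mk u v δ ∈ distTriang C)
    {AX BX : C} {aX : AX ⟶ X} {bX : X ⟶ BX} {dX : BX ⟶ (AX⟦(1:ℤ)⟧ : C)}
    (hDX : Triangle.mk aX bX dX ∈ distTriang C)
    (hAXw : AX ∈ w.wle i) (hAXle : AX ∈ t.le) (hBXw : BX ∈ w.wge (i+1)) (hBXge : BX ∈ t.ge)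
    {AY BY : C} {aY : AY ⟶ Y} {bY : Y ⟶ BY} {dY : BY ⟶ (AY⟦(1:ℤ)⟧ : C)}
    (hDY : Triangle.mk aY bY dY ∈ distTriang C)
    (hAYw : AY ∈ w.wle i) (hAYle : AY ∈ t.le) (hBYw : BY ∈ w.wge (i+1)) (hBYge : BY ∈ t.ge)
    {AZ BZ : C} {aZ : AZ ⟶ Z} {bZ : Z ⟶ BZ} {dZ : BZ ⟶ (AZ⟦(1:ℤ)⟧ : C)}
    (hDZ : Triangle.mk aZ bZ dZ ∈ distTriang C)
    (hAZw : AZ ∈ w.wle i) (hAZle : AZ ∈ t.le) (hBZw : BZ ∈ w.wge (i+1)) (hBZge : BZ ∈ t.ge)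
    {Ru : BX ⟶ BY} (hRu : bX ≫ Ru = u ≫ bY)
    {Rv : BY ⟶ BZ} (hRv : bY ≫ Rv = v ≫ bZ) :
    ∃ h : BZ ⟶ (BX⟦(1:ℤ)⟧ : C), Triangle.mk Ru Rv h ∈ distTriang C := by
  have hvδ : v ≫ δ = 0 := comp_distTriang_mor_zero₂₃ _ hT
  -- the connecting map h'
  have hobs : aZ ≫ (δ ≫ (shiftFunctor C (1:ℤ)).map bX) = 0 := by
    rw [← Category.assoc]
    exact BWS_orth w (show i < i + 1 + 1 by omega) hAZw (wge_shift1 w hBXw) _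
  obtain ⟨h', hh'⟩ : ∃ h' : BZ ⟶ ((BX⟦(1:ℤ)⟧ : C)),
      bZ ≫ h' = δ ≫ (shiftFunctor C (1:ℤ)).map bX :=
    desc_ex hDZ _ hobs
  -- Ru ≫ Rv = 0
  have hRuRv : Ru ≫ Rv = 0 := by
    refine cancel_desc hDX (fun g => BTS_orth1 t hAXle hBZge g) ?_
    have huv : u ≫ v = 0 := comp_distTriang_mor_zero₁₂ _ hT
    rw [comp_zero, ← Category.assoc, hRu, Category.assoc, hRv, ← Category.assoc,
      huv, zero_comp]
  -- the cone of Rv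
  obtain ⟨M, m₂, m₃, hM⟩ := distinguished_cocone_triangle Rv
  have hRvm₂ : Rv ≫ m₂ = 0 := comp_distTriang_mor_zero₁₂ _ hM
  have hm₂₃ : m₂ ≫ m₃ = 0 := comp_distTriang_mor_zero₂₃ _ hM
  have hm₃Rv : m₃ ≫ (shiftFunctor C (1:ℤ)).map Rv = 0 := comp_distTriang_mor_zero₃₁ _ hM
  obtain ⟨cM, hc₁, hc₂⟩ : ∃ cM : (X⟦(1:ℤ)⟧ : C) ⟶ M,
      δ ≫ cM = bZ ≫ m₂ ∧
      (-((shiftFunctor C (1:ℤ)).map u)) ≫ (shiftFunctor C (1:ℤ)).map bY = cM ≫ m₃ :=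
    complete_distinguished_triangle_morphism (Triangle.mk u v δ).rotate
      (Triangle.mk Rv m₂ m₃) (rot_of_distTriang _ hT) hM bY bZ hRv.symm
  -- vanishing of maps into M
  have homM : ∀ (W : C), (∀ g : W ⟶ BZ, g = 0) → (∀ g : W ⟶ ((BY⟦(1:ℤ)⟧ : C)), g = 0) →
      ∀ φ : W ⟶ M, φ = 0 := by
    intro W h1 h2 φ
    obtain ⟨g, hg⟩ : ∃ g : W ⟶ BZ, φ = g ≫ m₂ :=
      Triangle.coyoneda_exact₃ _ hM φ (h2 (φ ≫ m₃))
    rw [hg, h1 g, zero_comp]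
  have homMX : ∀ φ : ((AX⟦(1:ℤ)⟧ : C)) ⟶ M, φ = 0 :=
    homM _ (fun g => BTS_orth1 t hAXle hBZge g)
      (fun g => shift1_zero (fun g₀ => BWS_orth w (by omega) hAXw hBYw g₀) g)
  have homMY : ∀ φ : ((AY⟦(1:ℤ)⟧ : C)) ⟶ M, φ = 0 :=
    homM _ (fun g => BTS_orth1 t hAYle hBZge g)
      (fun g => shift1_zero (fun g₀ => BWS_orth w (by omega) hAYw hBYw g₀) g)
  have homMZ : ∀ φ : ((AZ⟦(1:ℤ)⟧ : C)) ⟶ M, φ = 0 :=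
    homM _ (fun g => BTS_orth1 t hAZle hBZge g)
      (fun g => shift1_zero (fun g₀ => BWS_orth w (by omega) hAZw hBYw g₀) g)
  have homMY2 : ∀ φ : (((AY⟦(1:ℤ)⟧ : C))⟦(1:ℤ)⟧ : C) ⟶ M, φ = 0 :=
    homM _ (fun g => BTS_orth1 t (t.le_shift AY hAYle) hBZge g)
      (fun g => shift1_zero (fun g₀ => BTS_orth1 t hAYle hBYge g₀) g)
  -- the comparison map t3 : BX⟦1⟧ ⟶ M
  obtain ⟨g1, hg1⟩ : ∃ g : ((BX⟦(1:ℤ)⟧ : C)) ⟶ M,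
      cM = (-((shiftFunctor C (1:ℤ)).map bX)) ≫ g := by
    refine Triangle.yoneda_exact₃ _ (rot_of_distTriang _ (rot_of_distTriang _ hDX)) cM ?_
    dsimp only [Triangle.mk, Triangle.rotate, Iso.refl]
    rw [Preadditive.neg_comp]
    exact neg_eq_zero.mpr (homMX _)
  set t3 : ((BX⟦(1:ℤ)⟧ : C)) ⟶ M := -g1 with ht3def
  have hbt3 : (shiftFunctor C (1:ℤ)).map bX ≫ t3 = cM := by
    rw [ht3def, Preadditive.comp_neg, hg1, Preadditive.neg_comp]
  -- relations
  have rel4 : h' ≫ t3 = m₂ := by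
    refine cancel_desc hDZ homMZ ?_
    rw [← Category.assoc, hh', Category.assoc, hbt3, hc₁]
  have rel5 : t3 ≫ m₃ = -((shiftFunctor C (1:ℤ)).map Ru) := by
    refine cancel_shift_desc hDX (fun g => shift1_zero (fun g₀ => BTS_orth1 t hAXle hBYge g₀) g) ?_
    rw [← Category.assoc, hbt3, ← hc₂, Preadditive.neg_comp, Preadditive.comp_neg,
      ← Functor.map_comp, ← Functor.map_comp, hRu]
  -- the retraction s₁ and section s3
  have hRvh' : Rv ≫ h' = 0 := by
    refine cancel_desc hDY (fun g => shift1_zero (fun g₀ => BWS_orth w (by omega) hAYw hBXw g₀) g) ?_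
    rw [comp_zero, ← Category.assoc, hRv, Category.assoc, hh', ← Category.assoc, hvδ, zero_comp]
  obtain ⟨s₁, hs₁⟩ : ∃ s₁ : M ⟶ ((BX⟦(1:ℤ)⟧ : C)), h' = m₂ ≫ s₁ :=
    Triangle.yoneda_exact₂ _ hM h' hRvh'
  have hφX : δ ≫ (cM ≫ s₁ - (shiftFunctor C (1:ℤ)).map bX) = 0 := by
    rw [Preadditive.comp_sub, ← Category.assoc, hc₁, Category.assoc, ← hs₁, ← hh', sub_self]
  obtain ⟨ψ, hψ⟩ : ∃ ψ : ((Y⟦(1:ℤ)⟧ : C)) ⟶ ((BX⟦(1:ℤ)⟧ : C)),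
      cM ≫ s₁ - (shiftFunctor C (1:ℤ)).map bX = (-((shiftFunctor C (1:ℤ)).map u)) ≫ ψ :=
    Triangle.yoneda_exact₃ _ (rot_of_distTriang _ hT) _ hφX
  obtain ⟨ψ₀, hψ₀⟩ := (shiftFunctor C (1:ℤ)).map_surjective ψ
  obtain ⟨σ, hσ⟩ : ∃ σ : BY ⟶ BX, ψ₀ = bY ≫ σ :=
    Triangle.yoneda_exact₂ _ hDY ψ₀ (BWS_orth w (by omega) hAYw hBXw _)
  have hts : t3 ≫ (s₁ - m₃ ≫ (shiftFunctor C (1:ℤ)).map σ) = 𝟙 ((BX⟦(1:ℤ)⟧ : C)) := by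
    have e0 : cM ≫ s₁ - (shiftFunctor C (1:ℤ)).map bX
        = -((shiftFunctor C (1:ℤ)).map bX ≫ (shiftFunctor C (1:ℤ)).map (Ru ≫ σ)) := by
      rw [hψ, ← hψ₀, hσ, Preadditive.neg_comp, ← Functor.map_comp, ← Functor.map_comp,
        ← Category.assoc u bY σ, ← hRu, Category.assoc bX Ru σ]
    have hcm₃ : cM ≫ m₃ = -((shiftFunctor C (1:ℤ)).map bX ≫ (shiftFunctor C (1:ℤ)).map Ru) := by
      rw [← hbt3, Category.assoc, rel5, Preadditive.comp_neg]
    have hbt3' : ∀ {W : C} (g : M ⟶ W),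
        (shiftFunctor C (1:ℤ)).map bX ≫ t3 ≫ g = cM ≫ g := by
      intro W g
      rw [← Category.assoc, hbt3]
    refine cancel_shift_desc hDX (fun g => shift1_zero (fun g₀ => BTS_orth1 t hAXle hBXge g₀) g) ?_
    simp only [Preadditive.comp_sub, Category.assoc]
    rw [hbt3' s₁, hbt3' (m₃ ≫ (shiftFunctor C (1:ℤ)).map σ), Category.comp_id,
      ← Category.assoc cM m₃, hcm₃, Preadditive.neg_comp, sub_neg_eq_add,
      sub_eq_iff_eq_add.mp e0]
    simp only [Functor.map_comp, Category.assoc]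
    abel
  have injM : ∀ θ : M ⟶ M, t3 ≫ θ = 0 → θ = 0 := by
    intro θ hθ
    have hm₂θ : m₂ ≫ θ = 0 := by rw [← rel4, Category.assoc, hθ, comp_zero]
    obtain ⟨χ, hχ⟩ : ∃ χ : ((BY⟦(1:ℤ)⟧ : C)) ⟶ M, θ = m₃ ≫ χ :=
      Triangle.yoneda_exact₃ _ hM θ hm₂θ
    have hRuχ : (shiftFunctor C (1:ℤ)).map Ru ≫ χ = 0 := by
      have h0 : (-((shiftFunctor C (1:ℤ)).map Ru)) ≫ χ = 0 := by
        rw [← rel5, Category.assoc, ← hχ, hθ]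
      rwa [Preadditive.neg_comp, neg_eq_zero] at h0
    have hν : (shiftFunctor C (1:ℤ)).map u ≫ ((shiftFunctor C (1:ℤ)).map bY ≫ χ) = 0 := by
      rw [← Category.assoc, ← Functor.map_comp, ← hRu, Functor.map_comp, Category.assoc,
        hRuχ, comp_zero]
    obtain ⟨ψ', hψ'⟩ : ∃ ψ' : ((Z⟦(1:ℤ)⟧ : C)) ⟶ M,
        (shiftFunctor C (1:ℤ)).map bY ≫ χ = (-((shiftFunctor C (1:ℤ)).map v)) ≫ ψ' := by
      refine Triangle.yoneda_exact₃ _ (rot_of_distTriang _ (rot_of_distTriang _ hT)) _ ?_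
      dsimp only [Triangle.mk, Triangle.rotate, Iso.refl]
      rw [Preadditive.neg_comp, hν, neg_zero]
      rfl
    obtain ⟨ψ'', hψ''⟩ : ∃ ψ'' : ((BZ⟦(1:ℤ)⟧ : C)) ⟶ M,
        ψ' = (-((shiftFunctor C (1:ℤ)).map bZ)) ≫ ψ'' := by
      refine Triangle.yoneda_exact₃ _ (rot_of_distTriang _ (rot_of_distTriang _ hDZ)) ψ' ?_
      dsimp only [Triangle.mk, Triangle.rotate, Iso.refl]
      rw [Preadditive.neg_comp]
      exact neg_eq_zero.mpr (homMZ _)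
    have e2 : (shiftFunctor C (1:ℤ)).map bY ≫ χ
        = (shiftFunctor C (1:ℤ)).map bY ≫ ((shiftFunctor C (1:ℤ)).map Rv ≫ ψ'') := by
      rw [hψ', hψ'', Preadditive.neg_comp, Preadditive.neg_comp, Preadditive.comp_neg, neg_neg,
        ← Category.assoc, ← Functor.map_comp, ← hRv, Functor.map_comp, Category.assoc]
    have hdiff : χ = (shiftFunctor C (1:ℤ)).map Rv ≫ ψ'' := cancel_shift_desc hDY homMY2 e2
    rw [hχ, hdiff, ← Category.assoc, hm₃Rv, zero_comp]
  have hst : (s₁ - m₃ ≫ (shiftFunctor C (1:ℤ)).map σ) ≫ t3 = 𝟙 M := by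
    have h0 : t3 ≫ ((s₁ - m₃ ≫ (shiftFunctor C (1:ℤ)).map σ) ≫ t3 - 𝟙 M) = 0 := by
      rw [Preadditive.comp_sub, ← Category.assoc, hts, Category.comp_id, Category.id_comp,
        sub_self]
    have h1 := injM _ h0
    rwa [sub_eq_zero] at h1
  refine ⟨h', ?_⟩
  rw [rotate_distinguished_triangle]
  refine isomorphic_distinguished _ hM _ ?_
  refine Triangle.isoMk _ _ (Iso.refl _) (Iso.refl _)
    (⟨t3, s₁ - m₃ ≫ (shiftFunctor C (1:ℤ)).map σ, hts, hst⟩ : ((BX⟦(1:ℤ)⟧ : C)) ≅ M) ?_ ?_ ?_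
  · dsimp only [Triangle.mk, Triangle.rotate, Iso.refl]; rw [Category.comp_id, Category.id_comp]
  · dsimp only [Triangle.mk, Triangle.rotate, Iso.refl]; rw [rel4, Category.id_comp]
  · dsimp only [Triangle.mk, Triangle.rotate, Iso.refl]
    rw [(shiftFunctor C (1:ℤ)).map_id, Category.comp_id, rel5]
    rfl

section Construction

variable {w t} (h4 : ConditionIV w t) (i : ℤ)

/-- the `w≤i`-part of the chosen nice weight decomposition -/
noncomputable def ndA (X : Heart t) : C := (h4 X.obj X.property i).choose

/-- the `w≥i+1`-part of the chosen nice weight decomposition -/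
noncomputable def ndB (X : Heart t) : C := (h4 X.obj X.property i).choose_spec.choose

noncomputable def nda (X : Heart t) : ndA h4 i X ⟶ X.obj :=
  (h4 X.obj X.property i).choose_spec.choose_spec.choose

noncomputable def ndb (X : Heart t) : X.obj ⟶ ndB h4 i X :=
  (h4 X.obj X.property i).choose_spec.choose_spec.choose_spec.choose

noncomputable def ndd (X : Heart t) : ndB h4 i X ⟶ ((ndA h4 i X⟦(1:ℤ)⟧ : C)) :=
  (h4 X.obj X.property i).choose_spec.choose_spec.choose_spec.choose_spec.choose

lemma nd_spec (X : Heart t) :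
    (Triangle.mk (nda h4 i X) (ndb h4 i X) (ndd h4 i X) ∈ (distTriang C)) ∧
    ndA h4 i X ∈ w.wle i ∧ ndB h4 i X ∈ w.wge (i+1) ∧
    ndA h4 i X ∈ t.heart ∧ X.obj ∈ t.heart ∧ ndB h4 i X ∈ t.heart :=
  (h4 X.obj X.property i).choose_spec.choose_spec.choose_spec.choose_spec.choose_spec

lemma nd_dist (X : Heart t) :
    Triangle.mk (nda h4 i X) (ndb h4 i X) (ndd h4 i X) ∈ (distTriang C) := (nd_spec h4 i X).1
lemma ndA_wle (X : Heart t) : ndA h4 i X ∈ w.wle i := (nd_spec h4 i X).2.1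
lemma ndB_wge (X : Heart t) : ndB h4 i X ∈ w.wge (i+1) := (nd_spec h4 i X).2.2.1
lemma ndA_heart (X : Heart t) : ndA h4 i X ∈ t.heart := (nd_spec h4 i X).2.2.2.1
lemma ndB_heart (X : Heart t) : ndB h4 i X ∈ t.heart := (nd_spec h4 i X).2.2.2.2.2
lemma ndA_le (X : Heart t) : ndA h4 i X ∈ t.le := (ndA_heart h4 i X).1
lemma ndA_ge (X : Heart t) : ndA h4 i X ∈ t.ge := (ndA_heart h4 i X).2
lemma ndB_ge (X : Heart t) : ndB h4 i X ∈ t.ge := (ndB_heart h4 i X).2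

/-- the lift of a morphism to the `w≤i`-parts -/
noncomputable def ndL {X Y : Heart t} (f : X.obj ⟶ Y.obj) : ndA h4 i X ⟶ ndA h4 i Y :=
  (lift_ex (nd_dist h4 i Y) (nda h4 i X ≫ f)
    (BWS_orth w (lt_add_one i) (ndA_wle h4 i X) (ndB_wge h4 i Y) _)).choose

lemma ndL_spec {X Y : Heart t} (f : X.obj ⟶ Y.obj) :
    ndL h4 i f ≫ nda h4 i Y = nda h4 i X ≫ f :=
  (lift_ex (nd_dist h4 i Y) (nda h4 i X ≫ f)
    (BWS_orth w (lt_add_one i) (ndA_wle h4 i X) (ndB_wge h4 i Y) _)).choose_spec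

lemma ndL_eq {X Y : Heart t} (f : X.obj ⟶ Y.obj) (l : ndA h4 i X ⟶ ndA h4 i Y)
    (hl : l ≫ nda h4 i Y = nda h4 i X ≫ f) : l = ndL h4 i f := by
  refine cancel_lift t (nd_dist h4 i Y) (ndA_le h4 i X) (ndB_ge h4 i Y) ?_
  rw [hl, ndL_spec]

/-- the descent of a morphism to the `w≥i+1`-parts -/
noncomputable def ndR {X Y : Heart t} (f : X.obj ⟶ Y.obj) : ndB h4 i X ⟶ ndB h4 i Y :=
  (desc_ex (nd_dist h4 i X) (f ≫ ndb h4 i Y)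
    (by
      rw [← Category.assoc]
      exact BWS_orth w (lt_add_one i) (ndA_wle h4 i X) (ndB_wge h4 i Y) _)).choose

lemma ndR_spec {X Y : Heart t} (f : X.obj ⟶ Y.obj) :
    ndb h4 i X ≫ ndR h4 i f = f ≫ ndb h4 i Y :=
  (desc_ex (nd_dist h4 i X) (f ≫ ndb h4 i Y)
    (by
      rw [← Category.assoc]
      exact BWS_orth w (lt_add_one i) (ndA_wle h4 i X) (ndB_wge h4 i Y) _)).choose_spec

lemma ndR_eq {X Y : Heart t} (f : X.obj ⟶ Y.obj) (l : ndB h4 i X ⟶ ndB h4 i Y)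
    (hl : ndb h4 i X ≫ l = f ≫ ndb h4 i Y) : l = ndR h4 i f := by
  refine cancel_desc (nd_dist h4 i X)
    (fun g => BTS_orth1 t (ndA_le h4 i X) (ndB_ge h4 i Y) g) ?_
  rw [hl, ndR_spec]

/-- the left truncation functor -/
noncomputable def Lfun : Heart t ⥤ Heart t where
  obj X := ⟨ndA h4 i X, ndA_heart h4 i X⟩
  map {X Y} f := ObjectProperty.homMk (ndL h4 i f.hom)
  map_id X := by
    symm
    apply ObjectProperty.hom_ext
    refine ndL_eq h4 i _ _ ?_
    show 𝟙 (ndA h4 i X) ≫ nda h4 i X = nda h4 i X ≫ 𝟙 X.obj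
    rw [Category.id_comp, Category.comp_id]
  map_comp {X Y Z} f g := by
    symm
    apply ObjectProperty.hom_ext
    refine ndL_eq h4 i _ _ ?_
    show (ndL h4 i f.hom ≫ ndL h4 i g.hom) ≫ nda h4 i Z = nda h4 i X ≫ (homC f ≫ homC g)
    rw [Category.assoc, ndL_spec, ← Category.assoc, ndL_spec, Category.assoc]
    rfl

/-- the right truncation functor -/
noncomputable def Rfun : Heart t ⥤ Heart t where
  obj X := ⟨ndB h4 i X, ndB_heart h4 i X⟩
  map {X Y} f := ObjectProperty.homMk (ndR h4 i f.hom)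
  map_id X := by
    symm
    apply ObjectProperty.hom_ext
    refine ndR_eq h4 i _ _ ?_
    show ndb h4 i X ≫ 𝟙 (ndB h4 i X) = 𝟙 X.obj ≫ ndb h4 i X
    rw [Category.id_comp, Category.comp_id]
  map_comp {X Y Z} f g := by
    symm
    apply ObjectProperty.hom_ext
    refine ndR_eq h4 i _ _ ?_
    show ndb h4 i X ≫ (ndR h4 i f.hom ≫ ndR h4 i g.hom) = (homC f ≫ homC g) ≫ ndb h4 i Z
    rw [← Category.assoc, ndR_spec, Category.assoc, ndR_spec, ← Category.assoc]
    rfl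

/-- the natural transformation `L ⟶ 𝟭` -/
noncomputable def αnat : Lfun h4 i ⟶ 𝟭 (Heart t) where
  app X := ObjectProperty.homMk (nda h4 i X)
  naturality X Y f := ObjectProperty.hom_ext _ (ndL_spec h4 i f.hom)

/-- the natural transformation `𝟭 ⟶ R` -/
noncomputable def βnat : 𝟭 (Heart t) ⟶ Rfun h4 i where
  app X := ObjectProperty.homMk (ndb h4 i X)
  naturality X Y f := ObjectProperty.hom_ext _ (ndR_spec h4 i f.hom).symm

end Construction

end Aux

/-- Theorem 1.1, implication (iv) ⟹ (iv'): if nice weight decompositions exist, then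
for every `i` there are exact functors `L_i, R_i` on the heart of `t` together with
natural transformations `L_i ⟶ Id ⟶ R_i` such that `L_i X ∈ C^{w≤i}`,
`R_i X ∈ C^{w≥i+1}`, and `0 → L_i X → X → R_i X → 0` is a short exact sequence in the
heart. -/
theorem functorial_nice_decompositions (w : BoundedWeightStructure C)
    (t : BoundedTStructure C) (h4 : ConditionIV w t) (i : ℤ) :
    ∃ (L R : Heart t ⥤ Heart t) (α : L ⟶ 𝟭 (Heart t)) (β : 𝟭 (Heart t) ⟶ R),
      (∀ X : Heart t, (L.obj X).obj ∈ w.wle i) ∧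
      (∀ X : Heart t, (R.obj X).obj ∈ w.wge (i + 1)) ∧
      HeartExact t L ∧ HeartExact t R ∧
      (∀ X : Heart t, HeartSES t (homC (α.app X)) (homC (β.app X))) := by
  classical
  refine ⟨Lfun h4 i, Rfun h4 i, αnat h4 i, βnat h4 i,
    fun X => ndA_wle h4 i X, fun X => ndB_wge h4 i X, ?_, ?_, ?_⟩
  · intro X Y Z f g hses
    obtain ⟨hX, hY, hZ, δ, hdist⟩ := hses
    refine ⟨ndA_heart h4 i X, ndA_heart h4 i Y, ndA_heart h4 i Z, ?_⟩
    exact L_dist w t i hdist hZ.2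
      (nd_dist h4 i X) (ndA_wle h4 i X) (ndA_le h4 i X) (ndB_wge h4 i X) (ndB_ge h4 i X)
      (nd_dist h4 i Y) (ndA_wle h4 i Y) (ndA_le h4 i Y) (ndA_ge h4 i Y) (ndB_wge h4 i Y)
      (ndB_ge h4 i Y)
      (nd_dist h4 i Z) (ndA_wle h4 i Z) (ndA_le h4 i Z) (ndB_wge h4 i Z) (ndB_ge h4 i Z)
      (ndL_spec h4 i (homC f)) (ndL_spec h4 i (homC g))
  · intro X Y Z f g hses
    obtain ⟨hX, hY, hZ, δ, hdist⟩ := hses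
    refine ⟨ndB_heart h4 i X, ndB_heart h4 i Y, ndB_heart h4 i Z, ?_⟩
    exact R_dist w t i hdist
      (nd_dist h4 i X) (ndA_wle h4 i X) (ndA_le h4 i X) (ndB_wge h4 i X) (ndB_ge h4 i X)
      (nd_dist h4 i Y) (ndA_wle h4 i Y) (ndA_le h4 i Y) (ndB_wge h4 i Y) (ndB_ge h4 i Y)
      (nd_dist h4 i Z) (ndA_wle h4 i Z) (ndA_le h4 i Z) (ndB_wge h4 i Z) (ndB_ge h4 i Z)
      (ndR_spec h4 i (homC f)) (ndR_spec h4 i (homC g))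
  · intro X
    exact ⟨ndA_heart h4 i X, X.property, ndB_heart h4 i X, ndd h4 i X, nd_dist h4 i X⟩

end WT
end

section
/- Let C be a triangulated category carrying a bounded weight structure w and a bounded t-structure t satisfying condition (iv) of Theorem 1.1 (for every X ∈ Heart(t) and every i ∈ ℤ there exists a nice weight decomposition of X at level i). Then for every i ∈ ℤ: the inclusion of the full subcategory of Heart(t) on the objects lying in C^{w≤i} into Heart(t) admits a right adjoint W_{≤i}, whose composition with the inclusion is an exact endofunctor of Heart(t); dually, the inclusion of the full subcategory of Heart(t) on the objects lying in C^{w≥i+1} into Heart(t) admits a left adjoint W_{≥i+1}, given on objects by X ↦ X / W_{≤i}X, whose composition with the inclusion is an exact endofunctor of Heart(t). -/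
open CategoryTheory CategoryTheory.Limits CategoryTheory.Pretriangulated

universe v u

set_option linter.unusedSectionVars false
set_option maxHeartbeats 1000000

namespace WT

variable {C : Type u} [Category.{v} C] [Preadditive C] [HasZeroObject C]
  [HasShift C ℤ] [∀ n : ℤ, (shiftFunctor C n).Additive] [Pretriangulated C]

namespace Aux

lemma mem_shiftClass_of_iso {D : Set C} {p : ℤ} {X Y : C} (e : X ≅ Y)
    (h : Y ∈ shiftClass C D p) : X ∈ shiftClass C D p := by
  obtain ⟨Z, hZ, ⟨e'⟩⟩ := h
  exact ⟨Z, hZ, ⟨e.trans e'⟩⟩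

lemma mem_shiftClass_self {D : Set C} {X : C} (h : X ∈ D) : X ∈ shiftClass C D 0 :=
  ⟨X, h, ⟨((shiftFunctorZero C ℤ).app X).symm⟩⟩

lemma mem_shiftClass_cast {D : Set C} {p q : ℤ} (h : p = q) {X : C}
    (hX : X ∈ shiftClass C D p) : X ∈ shiftClass C D q := h ▸ hX

lemma mem_shiftClass_shift {D : Set C} {p : ℤ} {X : C} (h : X ∈ shiftClass C D p) (n : ℤ) :
    (X⟦n⟧ : C) ∈ shiftClass C D (p + n) := by
  obtain ⟨Z, hZ, ⟨e⟩⟩ := h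
  exact ⟨Z, hZ, ⟨(shiftFunctor C n).mapIso e ≪≫ ((shiftFunctorAdd' C p n (p+n) rfl).app Z).symm⟩⟩

lemma mem_shiftClass_shift' {D : Set C} {p q : ℤ} {X : C} (h : X ∈ shiftClass C D p) (n : ℤ)
    (hq : p + n = q) : (X⟦n⟧ : C) ∈ shiftClass C D q :=
  mem_shiftClass_cast hq (mem_shiftClass_shift h n)

lemma zero_of_iso {X X' Y Y' : C} (eX : X ≅ X') (eY : Y ≅ Y')
    (h : ∀ f : X' ⟶ Y', f = 0) (f : X ⟶ Y) : f = 0 := by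
  have : f = eX.hom ≫ (eX.inv ≫ f ≫ eY.hom) ≫ eY.inv := by simp
  rw [this, h (eX.inv ≫ f ≫ eY.hom)]; simp

lemma orth_shift_t (t : BoundedTStructure C) :
    ∀ (m : ℤ), m < 0 → ∀ X ∈ t.le, ∀ Y ∈ t.ge, ∀ f : X ⟶ (Y⟦m⟧ : C), f = 0 := by
  have key : ∀ (k : ℕ) (m : ℤ), m = -(k+1 : ℤ) →
      ∀ X ∈ t.le, ∀ Y ∈ t.ge, ∀ f : X ⟶ (Y⟦m⟧ : C), f = 0 := by
    intro k
    induction k with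
    | zero =>
      intro m hm X hX Y hY f
      have e : (Y⟦m⟧ : C) ≅ Y⟦(-1 : ℤ)⟧ := eqToIso (by rw [hm]; norm_num)
      have := t.orth X hX Y hY (f ≫ e.hom)
      calc f = (f ≫ e.hom) ≫ e.inv := by simp
      _ = 0 := by rw [this]; simp
    | succ n ih =>
      intro m hm X hX Y hY f
      have e : (Y⟦m⟧ : C) ≅ ((Y⟦(-1:ℤ)⟧)⟦-(n+1:ℤ)⟧ : C) :=
        (shiftFunctorAdd' C (-1) (-(n+1:ℤ)) m (by omega)).app Y
      have := ih (-(n+1:ℤ)) rfl X hX (Y⟦(-1:ℤ)⟧) (t.ge_shift Y hY) (f ≫ e.hom)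
      calc f = (f ≫ e.hom) ≫ e.inv := by simp
      _ = 0 := by rw [this]; simp
  intro m hm X hX Y hY f
  obtain ⟨k, hk⟩ : ∃ k : ℕ, m = -(k+1 : ℤ) := ⟨(-m-1).toNat, by omega⟩
  exact key k m hk X hX Y hY f

lemma vanT (t : BoundedTStructure C) {p q : ℤ} (hq : q < p) {X Y : C}
    (hX : X ∈ shiftClass C t.le p) (hY : Y ∈ shiftClass C t.ge q) (f : X ⟶ Y) : f = 0 := by
  obtain ⟨X', hX', ⟨eX⟩⟩ := hX
  obtain ⟨Y', hY', ⟨eY⟩⟩ := hY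
  refine zero_of_iso eX eY (fun g => ?_) f
  apply (shiftFunctor C (-p)).map_injective
  have hmid : (shiftFunctorCompIsoId C p (-p) (by omega)).inv.app X' ≫
      (shiftFunctor C (-p)).map g ≫ (shiftFunctorAdd' C q (-p) (q-p) (by omega)).inv.app Y' = 0 :=
    orth_shift_t t (q-p) (by omega) X' hX' Y' hY' _
  have : (shiftFunctor C (-p)).map g =
      (shiftFunctorCompIsoId C p (-p) (by omega)).hom.app X' ≫
      ((shiftFunctorCompIsoId C p (-p) (by omega)).inv.app X' ≫
        (shiftFunctor C (-p)).map g ≫ (shiftFunctorAdd' C q (-p) (q-p) (by omega)).inv.app Y') ≫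
      (shiftFunctorAdd' C q (-p) (q-p) (by omega)).hom.app Y' := by simp
  rw [this, hmid]
  simp

section Weight

variable [HasBinaryBiproducts C]

lemma orth_shift_w (w : BoundedWeightStructure C) :
    ∀ (m : ℤ), 0 < m → ∀ X ∈ w.le, ∀ Y ∈ w.ge, ∀ f : X ⟶ (Y⟦m⟧ : C), f = 0 := by
  have key : ∀ (k : ℕ) (m : ℤ), m = (k+1 : ℤ) →
      ∀ X ∈ w.le, ∀ Y ∈ w.ge, ∀ f : X ⟶ (Y⟦m⟧ : C), f = 0 := by
    intro k
    induction k with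
    | zero =>
      intro m hm X hX Y hY f
      have e : (Y⟦m⟧ : C) ≅ Y⟦(1 : ℤ)⟧ := eqToIso (by rw [hm]; norm_num)
      have := w.orth X hX Y hY (f ≫ e.hom)
      calc f = (f ≫ e.hom) ≫ e.inv := by simp
      _ = 0 := by rw [this]; simp
    | succ n ih =>
      intro m hm X hX Y hY f
      have e : (Y⟦m⟧ : C) ≅ ((Y⟦(1:ℤ)⟧)⟦(n+1:ℤ)⟧ : C) :=
        (shiftFunctorAdd' C 1 (n+1:ℤ) m (by omega)).app Y
      have := ih (n+1:ℤ) rfl X hX (Y⟦(1:ℤ)⟧) (w.ge_shift Y hY) (f ≫ e.hom)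
      calc f = (f ≫ e.hom) ≫ e.inv := by simp
      _ = 0 := by rw [this]; simp
  intro m hm X hX Y hY f
  obtain ⟨k, hk⟩ : ∃ k : ℕ, m = (k+1 : ℤ) := ⟨(m-1).toNat, by omega⟩
  exact key k m hk X hX Y hY f

lemma vanW (w : BoundedWeightStructure C) {p q : ℤ} (hq : p < q) {X Y : C}
    (hX : X ∈ shiftClass C w.le p) (hY : Y ∈ shiftClass C w.ge q) (f : X ⟶ Y) : f = 0 := by
  obtain ⟨X', hX', ⟨eX⟩⟩ := hX
  obtain ⟨Y', hY', ⟨eY⟩⟩ := hY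
  refine zero_of_iso eX eY (fun g => ?_) f
  apply (shiftFunctor C (-p)).map_injective
  have hmid : (shiftFunctorCompIsoId C p (-p) (by omega)).inv.app X' ≫
      (shiftFunctor C (-p)).map g ≫ (shiftFunctorAdd' C q (-p) (q-p) (by omega)).inv.app Y' = 0 :=
    orth_shift_w w (q-p) (by omega) X' hX' Y' hY' _
  have : (shiftFunctor C (-p)).map g =
      (shiftFunctorCompIsoId C p (-p) (by omega)).hom.app X' ≫
      ((shiftFunctorCompIsoId C p (-p) (by omega)).inv.app X' ≫
        (shiftFunctor C (-p)).map g ≫ (shiftFunctorAdd' C q (-p) (q-p) (by omega)).inv.app Y') ≫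
      (shiftFunctorAdd' C q (-p) (q-p) (by omega)).hom.app Y' := by simp
  rw [this, hmid]
  simp

end Weight

lemma hm_shift {D : Set C} {U V : C} (f : U ⟶ V) {m : ℤ}
    (h : ∀ S, S ∈ shiftClass C D m → ∀ s : S ⟶ U, s ≫ f = 0 → s = 0) (n q : ℤ)
    (hq : m + n = q) :
    ∀ S, S ∈ shiftClass C D q → ∀ s : S ⟶ (U⟦n⟧ : C), s ≫ f⟦n⟧' = 0 → s = 0 := by
  subst hq
  rintro S ⟨S₀, hS₀, ⟨e⟩⟩ s hs
  have e' : S ≅ ((S₀⟦m⟧)⟦n⟧ : C) := e ≪≫ (shiftFunctorAdd' C m n (m+n) rfl).app S₀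
  set s' : ((S₀⟦m⟧)⟦n⟧ : C) ⟶ (U⟦n⟧ : C) := e'.inv ≫ s with hs'
  obtain ⟨s₀, hs₀⟩ : ∃ s₀ : (S₀⟦m⟧ : C) ⟶ U, (shiftFunctor C n).map s₀ = s' :=
    ⟨(shiftFunctor C n).preimage s', (shiftFunctor C n).map_preimage s'⟩
  have hz : s₀ ≫ f = 0 := by
    apply (shiftFunctor C n).map_injective
    rw [Functor.map_comp, hs₀, Functor.map_zero, hs']
    simp [hs]
  have := h (S₀⟦m⟧) ⟨S₀, hS₀, ⟨Iso.refl _⟩⟩ s₀ hz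
  have hs'0 : s' = 0 := by rw [← hs₀, this, Functor.map_zero]
  calc s = e'.hom ≫ s' := by rw [hs']; simp
  _ = 0 := by rw [hs'0]; simp

/-- If the third object of a distinguished triangle receives no nonzero maps from
shifted `t.le`-objects through `mor₁`-cancellation, and the second object is in
`t.ge`-class, the third object is in the `t.ge`-class. -/
lemma ge_of_hmono (t : BoundedTStructure C) {T : Triangle C} (hT : T ∈ distTriang C)
    (h2 : T.obj₂ ∈ shiftClass C t.ge 0)
    (hm : ∀ S, S ∈ shiftClass C t.le 0 → ∀ s : S ⟶ T.obj₁, s ≫ T.mor₁ = 0 → s = 0) :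
    T.obj₃ ∈ shiftClass C t.ge 0 := by
  obtain ⟨A', B'', f', g', h', hdec, hA', hB''⟩ := t.decomp (T.obj₃⟦(-1:ℤ)⟧)
  -- show f' = 0
  have e₃ : ((T.obj₃⟦(-1:ℤ)⟧)⟦(1:ℤ)⟧ : C) ≅ T.obj₃ :=
    (shiftFunctorCompIsoId C (-1) 1 (by omega)).app T.obj₃
  set s₁ : (A'⟦(1:ℤ)⟧ : C) ⟶ T.obj₃ := f'⟦(1:ℤ)⟧' ≫ e₃.hom with hs₁
  have hs₂ : (s₁ ≫ T.mor₃) ≫ T.mor₁⟦(1:ℤ)⟧' = 0 := by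
    rw [Category.assoc, comp_distTriang_mor_zero₃₁ T hT, comp_zero]
  have hs₃ : s₁ ≫ T.mor₃ = 0 :=
    hm_shift T.mor₁ hm 1 1 (by omega) _ (mem_shiftClass_shift' (mem_shiftClass_self hA') 1 rfl)
      _ hs₂
  obtain ⟨g₀, hg₀⟩ := Triangle.coyoneda_exact₃ T hT s₁ hs₃
  have hg₀z : g₀ = 0 := vanT t (p := 1) (q := 0) (by omega)
    (mem_shiftClass_shift' (mem_shiftClass_self hA') 1 rfl) h2 g₀
  have hs₁z : s₁ = 0 := by rw [hg₀, hg₀z, zero_comp]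
  have hf' : f' = 0 := by
    apply (shiftFunctor C (1:ℤ)).map_injective
    rw [Functor.map_zero]
    have : f'⟦(1:ℤ)⟧' = s₁ ≫ e₃.inv := by rw [hs₁]; simp
    rw [this, hs₁z, zero_comp]
  -- A'⟦1⟧ is zero
  obtain ⟨σ, hσ⟩ : ∃ σ : (A'⟦(1:ℤ)⟧ : C) ⟶ B'', 𝟙 (A'⟦(1:ℤ)⟧ : C) = σ ≫ h' :=
    Triangle.coyoneda_exact₁ _ hdec (𝟙 (A'⟦(1:ℤ)⟧))
    (by change 𝟙 _ ≫ f'⟦(1:ℤ)⟧' = 0; rw [hf', Functor.map_zero, comp_zero])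
  have hσz : σ = 0 := vanT t (p := 1) (q := -1) (by omega)
    (mem_shiftClass_shift' (mem_shiftClass_self hA') 1 rfl) hB'' σ
  have hzero : IsZero A' := by
    have h1 : 𝟙 (A'⟦(1:ℤ)⟧ : C) = 0 := by rw [hσ, hσz, zero_comp]
    rw [IsZero.iff_id_eq_zero]
    apply (shiftFunctor C (1:ℤ)).map_injective
    rw [CategoryTheory.Functor.map_id, CategoryTheory.Functor.map_zero]
    exact h1
  -- hence obj₃⟦-1⟧ ≅ B''
  have : IsIso g' := by
    have := (Triangle.isZero₁_iff_isIso₂ _ hdec).1 (by exact hzero)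
    exact this
  have hmem : (T.obj₃⟦(-1:ℤ)⟧ : C) ∈ shiftClass C t.ge (-1) :=
    mem_shiftClass_of_iso (asIso g') hB''
  exact mem_shiftClass_of_iso e₃.symm (mem_shiftClass_shift' hmem 1 (by omega))

/-- Dual statement: if the first object of a distinguished triangle has no nonzero
maps to `t.ge`-class objects through `mor₂`-cancellation, and the second object is in
the `t.le`-class, then the first object is in the `t.le`-class. -/
lemma le_of_hepi (t : BoundedTStructure C) {T : Triangle C} (hT : T ∈ distTriang C)
    (h2 : T.obj₂ ∈ shiftClass C t.le 0)
    (he : ∀ W, W ∈ shiftClass C t.ge 0 → ∀ ξ : T.obj₃ ⟶ W, T.mor₂ ≫ ξ = 0 → ξ = 0) :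
    T.obj₁ ∈ shiftClass C t.le 0 := by
  obtain ⟨A', B'', f', g', h', hdec, hA', hB''⟩ := t.decomp T.obj₁
  -- show g' = 0 : first, the composition ρ ≫ g' vanishes where ρ is the map from obj₃⟦-1⟧
  set ρ : (T.obj₃⟦(-1:ℤ)⟧ : C) ⟶ T.obj₁ := T.invRotate.mor₁ with hρ
  set cinv : T.obj₃ ⟶ ((T.obj₃⟦(-1:ℤ)⟧)⟦(1:ℤ)⟧ : C) :=
    (shiftEquiv C (1:ℤ)).counitIso.inv.app T.obj₃ with hcinv
  have hcons : T.mor₂ ≫ cinv ≫ ρ⟦(1:ℤ)⟧' = 0 := by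
    have h0 := comp_distTriang_mor_zero₃₁ _ (inv_rot_of_distTriang _ hT)
    rw [← Category.assoc]
    exact h0
  have hξ₁ : cinv ≫ ρ⟦(1:ℤ)⟧' ≫ g'⟦(1:ℤ)⟧' = 0 := by
    apply he _ (mem_shiftClass_shift' hB'' 1 (by omega))
    calc T.mor₂ ≫ cinv ≫ ρ⟦(1:ℤ)⟧' ≫ g'⟦(1:ℤ)⟧'
        = (T.mor₂ ≫ cinv ≫ ρ⟦(1:ℤ)⟧') ≫ g'⟦(1:ℤ)⟧' := by simp only [Category.assoc]
      _ = 0 := by rw [hcons, zero_comp]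
  have hρg : ρ ≫ g' = 0 := by
    apply (shiftFunctor C (1:ℤ)).map_injective
    rw [CategoryTheory.Functor.map_comp, CategoryTheory.Functor.map_zero]
    rw [hcinv] at hξ₁
    exact (cancel_epi ((shiftEquiv C (1:ℤ)).counitIso.inv.app T.obj₃)).mp
      (hξ₁.trans comp_zero.symm)
  have hg' : g' = 0 := by
    obtain ⟨e₁, he₁⟩ : ∃ e₁ : T.obj₂ ⟶ B'', g' = T.mor₁ ≫ e₁ :=
      Triangle.yoneda_exact₂ _ (inv_rot_of_distTriang _ hT) g' hρg
    have : e₁ = 0 := by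
      have h2'' : T.invRotate.obj₃ ∈ shiftClass C t.le 0 := h2
      exact vanT t (p := 0) (q := -1) (by omega) h2'' hB'' e₁
    rw [he₁, this, comp_zero]
  -- B'' is zero
  obtain ⟨g₂, hg₂⟩ : ∃ g₂ : (A'⟦(1:ℤ)⟧ : C) ⟶ B'', 𝟙 B'' = h' ≫ g₂ :=
    Triangle.yoneda_exact₃ _ hdec (𝟙 B'') (by change g' ≫ 𝟙 B'' = 0; rw [hg', zero_comp])
  have hg₂z : g₂ = 0 := vanT t (p := 1) (q := -1) (by omega)
    (mem_shiftClass_shift' (mem_shiftClass_self hA') 1 rfl) hB'' g₂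
  have hzero : IsZero B'' := by
    rw [IsZero.iff_id_eq_zero, hg₂, hg₂z, comp_zero]
  have : IsIso f' := (Triangle.isZero₃_iff_isIso₁ _ hdec).1 (by exact hzero)
  exact mem_shiftClass_of_iso (asIso f').symm (mem_shiftClass_self hA')

end Aux

end WT

namespace WT

variable {C : Type u} [Category.{v} C] [Preadditive C] [HasZeroObject C]
  [HasShift C ℤ] [∀ n : ℤ, (shiftFunctor C n).Additive] [Pretriangulated C]
  [HasBinaryBiproducts C]

namespace Aux

variable (w : BoundedWeightStructure C) (t : BoundedTStructure C) (i : ℤ)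

lemma rowA
    {X Y Z AX BX AY BY AZ BZ : C}
    {u : X ⟶ Y} {v : Y ⟶ Z} {w₀ : Z ⟶ (X⟦(1:ℤ)⟧ : C)}
    (hT : Triangle.mk u v w₀ ∈ distTriang C)
    (hXh : X ∈ t.heart) (hYh : Y ∈ t.heart) (hZh : Z ∈ t.heart)
    {fX : AX ⟶ X} {gX : X ⟶ BX} {hX : BX ⟶ (AX⟦(1:ℤ)⟧ : C)}
    (hTX : Triangle.mk fX gX hX ∈ distTriang C)
    (hAXw : AX ∈ w.wle i) (hBXw : BX ∈ w.wge (i+1)) (hAXh : AX ∈ t.heart) (hBXh : BX ∈ t.heart)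
    {fY : AY ⟶ Y} {gY : Y ⟶ BY} {hY : BY ⟶ (AY⟦(1:ℤ)⟧ : C)}
    (hTY : Triangle.mk fY gY hY ∈ distTriang C)
    (hAYw : AY ∈ w.wle i) (hBYw : BY ∈ w.wge (i+1)) (hAYh : AY ∈ t.heart) (hBYh : BY ∈ t.heart)
    {fZ : AZ ⟶ Z} {gZ : Z ⟶ BZ} {hZ : BZ ⟶ (AZ⟦(1:ℤ)⟧ : C)}
    (hTZ : Triangle.mk fZ gZ hZ ∈ distTriang C)
    (hAZw : AZ ∈ w.wle i) (hBZw : BZ ∈ w.wge (i+1)) (hAZh : AZ ∈ t.heart) (hBZh : BZ ∈ t.heart)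
    {a : AX ⟶ AY} {b : AY ⟶ AZ}
    (ha : a ≫ fY = fX ≫ u) (hb : b ≫ fZ = fY ≫ v) :
    ∃ c : AZ ⟶ (AX⟦(1:ℤ)⟧ : C), Triangle.mk a b c ∈ distTriang C := by
  -- complete `a` to a distinguished triangle
  obtain ⟨Q, p, q, hTQ⟩ := distinguished_cocone_triangle a
  have hap : a ≫ p = 0 := comp_distTriang_mor_zero₁₂ _ hTQ
  have hwu : w₀ ≫ u⟦(1:ℤ)⟧' = 0 := comp_distTriang_mor_zero₃₁ _ hT
  -- fill-in morphism r : Q ⟶ Z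
  obtain ⟨r0, hr₁0, hr₂0⟩ := complete_distinguished_triangle_morphism
    (Triangle.mk a p q) (Triangle.mk u v w₀) hTQ hT fX fY ha
  have rprop : ∃ r : Q ⟶ Z, p ≫ r = fY ≫ v ∧ q ≫ fX⟦(1:ℤ)⟧' = r ≫ w₀ := ⟨r0, hr₁0, hr₂0⟩
  obtain ⟨r, hr₁, hr₂⟩ := rprop
  -- r ≫ gZ = 0
  have hrgZ : r ≫ gZ = 0 := by
    have h1 : p ≫ (r ≫ gZ) = 0 := by
      rw [← Category.assoc, hr₁, Category.assoc]
      exact vanW w (p := i) (q := i+1) (by omega) hAYw hBZw _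
    obtain ⟨e, he⟩ : ∃ e : (AX⟦(1:ℤ)⟧ : C) ⟶ BZ, r ≫ gZ = q ≫ e :=
      Triangle.yoneda_exact₃ _ hTQ (r ≫ gZ) (by exact h1)
    have hez : e = 0 := vanT t (p := 1) (q := 0) (by omega)
      (mem_shiftClass_shift' (mem_shiftClass_self hAXh.1) 1 rfl)
      (mem_shiftClass_self hBZh.2) e
    rw [he, hez, comp_zero]
  -- lift r through fZ
  obtain ⟨φ0, hφ0⟩ := Triangle.coyoneda_exact₂ _ hTZ r hrgZ
  have φprop : ∃ φ : Q ⟶ AZ, r = φ ≫ fZ := ⟨φ0, hφ0⟩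
  obtain ⟨φ, hφ⟩ := φprop
  -- p ≫ φ = b
  have hpφ : p ≫ φ = b := by
    have h1 : (p ≫ φ - b) ≫ fZ = 0 := by
      rw [Preadditive.sub_comp, Category.assoc, ← hφ, hr₁, hb, sub_self]
    obtain ⟨e, he⟩ := Triangle.coyoneda_exact₂ _ (inv_rot_of_distTriang _ hTZ) (p ≫ φ - b)
      (by exact h1)
    have hez : e = 0 := vanT t (p := 0) (q := -1) (by omega)
      (mem_shiftClass_self hAYh.1)
      (mem_shiftClass_shift' (mem_shiftClass_self hBZh.2) (-1) (by omega)) e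
    rw [hez, zero_comp] at he
    exact sub_eq_zero.mp he
  -- injectivity of (· ≫ r) against heart ∩ wle i
  have inj : ∀ (T' : C), T' ∈ t.heart → T' ∈ w.wle i →
      ∀ x : T' ⟶ Q, x ≫ r = 0 → x = 0 := by
    intro T' hTh hTw x hx
    have h2 : (x ≫ q) ≫ (-(fX⟦(1:ℤ)⟧')) = 0 := by
      rw [Preadditive.comp_neg, Category.assoc, hr₂, ← Category.assoc, hx, zero_comp, neg_zero]
    have hxq : x ≫ q = 0 := by
      obtain ⟨η, hη0⟩ : ∃ η : T' ⟶ BX, x ≫ q = η ≫ hX := Triangle.coyoneda_exact₂ _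
        (rot_of_distTriang _ (rot_of_distTriang _ hTX)) (x ≫ q) (by exact h2)
      have hη : x ≫ q = η ≫ hX := hη0
      have hηz : η = 0 := vanW w (p := i) (q := i+1) (by omega) hTw hBXw η
      rw [hη, hηz, zero_comp]
    obtain ⟨y0, hy0⟩ := Triangle.coyoneda_exact₂ _ (rot_of_distTriang _ hTQ) x (by exact hxq)
    have yprop : ∃ y : T' ⟶ AY, x = y ≫ p := ⟨y0, hy0⟩
    obtain ⟨y, hy⟩ := yprop
    have h3 : (y ≫ fY) ≫ v = 0 := by
      rw [Category.assoc, ← hr₁, ← Category.assoc, ← hy, hx]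
    obtain ⟨ζ, hζ0⟩ : ∃ ζ : T' ⟶ X, y ≫ fY = ζ ≫ u := Triangle.coyoneda_exact₂ _ hT (y ≫ fY) h3
    have hζ : y ≫ fY = ζ ≫ u := hζ0
    have h4 : ζ ≫ gX = 0 := vanW w (p := i) (q := i+1) (by omega) hTw hBXw _
    obtain ⟨ζ', hζ'0⟩ : ∃ ζ' : T' ⟶ AX, ζ = ζ' ≫ fX := Triangle.coyoneda_exact₂ _ hTX ζ h4
    have hζ' : ζ = ζ' ≫ fX := hζ'0
    have h5 : (y - ζ' ≫ a) ≫ fY = 0 := by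
      rw [Preadditive.sub_comp, Category.assoc, ha, ← Category.assoc, ← hζ', ← hζ, sub_self]
    obtain ⟨e, he⟩ : ∃ e : T' ⟶ (BY⟦(-1:ℤ)⟧ : C), y - ζ' ≫ a =
        e ≫ (-hY⟦(-1:ℤ)⟧' ≫ (shiftEquiv C (1 : ℤ)).unitIso.inv.app AY) :=
      Triangle.coyoneda_exact₂ _ (inv_rot_of_distTriang _ hTY) (y - ζ' ≫ a)
      (by exact h5)
    have hez : e = 0 := vanT t (p := 0) (q := -1) (by omega)
      (mem_shiftClass_self hTh.1)
      (mem_shiftClass_shift' (mem_shiftClass_self hBYh.2) (-1) (by omega)) e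
    rw [hez, zero_comp] at he
    have hy' : y = ζ' ≫ a := sub_eq_zero.mp he
    rw [hy, hy', Category.assoc, hap, comp_zero]
  -- surjectivity at AZ : χ with χ ≫ r = fZ
  obtain ⟨χ, hχ⟩ : ∃ χ : AZ ⟶ Q, χ ≫ r = fZ := by
    have h6 : (fZ ≫ w₀) ≫ (-(gX⟦(1:ℤ)⟧')) = 0 := by
      rw [Preadditive.comp_neg, neg_eq_zero, Category.assoc]
      exact vanW w (p := i) (q := i+2) (by omega) hAZw
        (mem_shiftClass_shift' hBXw 1 (by omega)) _
    obtain ⟨m, hm0⟩ : ∃ m : AZ ⟶ (AX⟦(1:ℤ)⟧ : C), fZ ≫ w₀ = m ≫ (-(fX⟦(1:ℤ)⟧')) :=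
      Triangle.coyoneda_exact₃ _
      (rot_of_distTriang _ (rot_of_distTriang _ hTX)) (fZ ≫ w₀) (by exact h6)
    have hm : fZ ≫ w₀ = m ≫ (-(fX⟦(1:ℤ)⟧')) := hm0
    have m'prop : ∃ m' : AZ ⟶ (AX⟦(1:ℤ)⟧ : C), m' ≫ fX⟦(1:ℤ)⟧' = fZ ≫ w₀ := by
      refine ⟨-m, ?_⟩
      rw [Preadditive.neg_comp, ← Preadditive.comp_neg]
      exact hm.symm
    obtain ⟨m', hm'fX⟩ := m'prop
    have hma : m' ≫ a⟦(1:ℤ)⟧' = 0 := by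
      have h7 : (m' ≫ a⟦(1:ℤ)⟧') ≫ (-(fY⟦(1:ℤ)⟧')) = 0 := by
        rw [Preadditive.comp_neg, neg_eq_zero, Category.assoc, ← Functor.map_comp, ha,
          Functor.map_comp, ← Category.assoc, hm'fX, Category.assoc, hwu, comp_zero]
      obtain ⟨η, hη0⟩ : ∃ η : AZ ⟶ BY, m' ≫ a⟦(1:ℤ)⟧' = η ≫ hY := Triangle.coyoneda_exact₂ _
        (rot_of_distTriang _ (rot_of_distTriang _ hTY)) (m' ≫ a⟦(1:ℤ)⟧') (by exact h7)
      have hη : m' ≫ a⟦(1:ℤ)⟧' = η ≫ hY := hη0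
      have hηz : η = 0 := vanW w (p := i) (q := i+1) (by omega) hAZw hBYw η
      rw [hη, hηz, zero_comp]
    obtain ⟨x₀0, hx₀0⟩ := Triangle.coyoneda_exact₁ _ hTQ m' (by exact hma)
    have x₀prop : ∃ x₀ : AZ ⟶ Q, m' = x₀ ≫ q := ⟨x₀0, hx₀0⟩
    obtain ⟨x₀, hx₀⟩ := x₀prop
    have h8 : (fZ - x₀ ≫ r) ≫ w₀ = 0 := by
      rw [Preadditive.sub_comp, Category.assoc, ← hr₂, ← Category.assoc, ← hx₀, hm'fX, sub_self]
    obtain ⟨η₁0, hη₁0⟩ := Triangle.coyoneda_exact₃ _ hT (fZ - x₀ ≫ r) (by exact h8)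
    have η₁prop : ∃ η₁ : AZ ⟶ Y, fZ - x₀ ≫ r = η₁ ≫ v := ⟨η₁0, hη₁0⟩
    obtain ⟨η₁, hη₁⟩ := η₁prop
    have h9 : η₁ ≫ gY = 0 := vanW w (p := i) (q := i+1) (by omega) hAZw hBYw _
    obtain ⟨η₂, hη₂0⟩ : ∃ η₂ : AZ ⟶ AY, η₁ = η₂ ≫ fY := Triangle.coyoneda_exact₂ _ hTY η₁ h9
    have hη₂ : η₁ = η₂ ≫ fY := hη₂0
    refine ⟨x₀ + η₂ ≫ p, ?_⟩
    rw [Preadditive.add_comp, Category.assoc, hr₁, ← Category.assoc, ← hη₂, ← hη₁]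
    abel
  -- χ ≫ φ = 𝟙
  have hχφ : χ ≫ φ = 𝟙 AZ := by
    have h1 : (χ ≫ φ - 𝟙 AZ) ≫ fZ = 0 := by
      rw [Preadditive.sub_comp, Category.assoc, ← hφ, hχ, Category.id_comp, sub_self]
    obtain ⟨e, he⟩ := Triangle.coyoneda_exact₂ _ (inv_rot_of_distTriang _ hTZ) _ (by exact h1)
    have hez : e = 0 := vanT t (p := 0) (q := -1) (by omega)
      (mem_shiftClass_self hAZh.1)
      (mem_shiftClass_shift' (mem_shiftClass_self hBZh.2) (-1) (by omega)) e
    rw [hez, zero_comp] at he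
    exact sub_eq_zero.mp he
  -- Q is in the ge-class
  have hQge : Q ∈ shiftClass C t.ge 0 := by
    refine ge_of_hmono t hTQ (by exact mem_shiftClass_self hAYh.2) ?_
    change ∀ S, S ∈ shiftClass C t.le 0 → ∀ s : S ⟶ AX, s ≫ a = 0 → s = 0
    intro S hS s hs
    have hs' : s ≫ a = 0 := hs
    have h1 : (s ≫ fX) ≫ u = 0 := by
      rw [Category.assoc, ← ha, ← Category.assoc, hs', zero_comp]
    obtain ⟨σ, hσ⟩ : ∃ σ : S ⟶ (Z⟦(-1:ℤ)⟧ : C), s ≫ fX =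
        σ ≫ (-w₀⟦(-1:ℤ)⟧' ≫ (shiftEquiv C (1 : ℤ)).unitIso.inv.app X) :=
      Triangle.coyoneda_exact₂ _ (inv_rot_of_distTriang _ hT) (s ≫ fX)
      (by exact h1)
    have hσz : σ = 0 := vanT t (p := 0) (q := -1) (by omega) hS
      (mem_shiftClass_shift' (mem_shiftClass_self hZh.2) (-1) (by omega)) σ
    have hsfX : s ≫ fX = 0 := by rw [hσ, hσz, zero_comp]
    obtain ⟨τ, hτ⟩ : ∃ τ : S ⟶ (BX⟦(-1:ℤ)⟧ : C), s =
        τ ≫ (-hX⟦(-1:ℤ)⟧' ≫ (shiftEquiv C (1 : ℤ)).unitIso.inv.app AX) :=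
      Triangle.coyoneda_exact₂ _ (inv_rot_of_distTriang _ hTX) s (by exact hsfX)
    have hτz : τ = 0 := vanT t (p := 0) (q := -1) (by omega) hS
      (mem_shiftClass_shift' (mem_shiftClass_self hBXh.2) (-1) (by omega)) τ
    rw [hτ, hτz, zero_comp]
  -- φ ≫ χ = 𝟙
  have hφχ : φ ≫ χ = 𝟙 Q := by
    have hzr : (𝟙 Q - φ ≫ χ) ≫ r = 0 := by
      rw [Preadditive.sub_comp, Category.id_comp, Category.assoc, hχ, hφ, sub_self]
    have hpz : p ≫ (𝟙 Q - φ ≫ χ) = 0 := by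
      apply inj AY hAYh hAYw
      rw [Category.assoc, hzr, comp_zero]
    obtain ⟨y, hy0⟩ : ∃ y : (AX⟦(1:ℤ)⟧ : C) ⟶ Q, 𝟙 Q - φ ≫ χ = q ≫ y :=
      Triangle.yoneda_exact₃ _ hTQ (𝟙 Q - φ ≫ χ) (by exact hpz)
    have hy : 𝟙 Q - φ ≫ χ = q ≫ y := hy0
    have hyz : y = 0 := vanT t (p := 1) (q := 0) (by omega)
      (mem_shiftClass_shift' (mem_shiftClass_self hAXh.1) 1 rfl) hQge y
    rw [hyz, comp_zero, sub_eq_zero] at hy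
    exact hy.symm
  have hiso : IsIso φ := ⟨χ, hφχ, hχφ⟩
  -- conclude
  refine ⟨inv φ ≫ q, isomorphic_distinguished _ hTQ _ ?_⟩
  refine Triangle.isoMk _ _ (Iso.refl AX) (Iso.refl AY) ((asIso φ).symm)
    (by change a ≫ 𝟙 AY = 𝟙 AX ≫ a; simp) ?_ ?_
  · change b ≫ inv φ = 𝟙 AY ≫ p
    rw [Category.id_comp, ← hpφ, Category.assoc, IsIso.hom_inv_id, Category.comp_id]
  · change (inv φ ≫ q) ≫ (𝟙 AX)⟦(1:ℤ)⟧' = inv φ ≫ q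
    rw [CategoryTheory.Functor.map_id, Category.comp_id]

end Aux

end WT

namespace WT

variable {C : Type u} [Category.{v} C] [Preadditive C] [HasZeroObject C]
  [HasShift C ℤ] [∀ n : ℤ, (shiftFunctor C n).Additive] [Pretriangulated C]
  [HasBinaryBiproducts C]

namespace Aux

lemma units_smul_eq_zero_iff {X Y : C} (u : ℤˣ) (f : X ⟶ Y) : u • f = 0 ↔ f = 0 := by
  constructor
  · intro hzero
    have := congrArg (fun z => u⁻¹ • z) hzero
    simpa [smul_smul] using this
  · intro hzero; rw [hzero, smul_zero]

variable (w : BoundedWeightStructure C) (t : BoundedTStructure C) (i : ℤ)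

lemma rowB
    {X Y Z AX BX AY BY AZ BZ : C}
    {u : X ⟶ Y} {v : Y ⟶ Z} {w₀ : Z ⟶ (X⟦(1:ℤ)⟧ : C)}
    (hT : Triangle.mk u v w₀ ∈ distTriang C)
    (hXh : X ∈ t.heart) (hYh : Y ∈ t.heart) (hZh : Z ∈ t.heart)
    {fX : AX ⟶ X} {gX : X ⟶ BX} {hX : BX ⟶ (AX⟦(1:ℤ)⟧ : C)}
    (hTX : Triangle.mk fX gX hX ∈ distTriang C)
    (hAXw : AX ∈ w.wle i) (hBXw : BX ∈ w.wge (i+1)) (hAXh : AX ∈ t.heart) (hBXh : BX ∈ t.heart)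
    {fY : AY ⟶ Y} {gY : Y ⟶ BY} {hY : BY ⟶ (AY⟦(1:ℤ)⟧ : C)}
    (hTY : Triangle.mk fY gY hY ∈ distTriang C)
    (hAYw : AY ∈ w.wle i) (hBYw : BY ∈ w.wge (i+1)) (hAYh : AY ∈ t.heart) (hBYh : BY ∈ t.heart)
    {fZ : AZ ⟶ Z} {gZ : Z ⟶ BZ} {hZ : BZ ⟶ (AZ⟦(1:ℤ)⟧ : C)}
    (hTZ : Triangle.mk fZ gZ hZ ∈ distTriang C)
    (hAZw : AZ ∈ w.wle i) (hBZw : BZ ∈ w.wge (i+1)) (hAZh : AZ ∈ t.heart) (hBZh : BZ ∈ t.heart)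
    {ga : BX ⟶ BY} {gb : BY ⟶ BZ}
    (hga : gX ≫ ga = u ≫ gY) (hgb : gY ≫ gb = v ≫ gZ) :
    ∃ c : BZ ⟶ (BX⟦(1:ℤ)⟧ : C), Triangle.mk ga gb c ∈ distTriang C := by
  -- complete `gb` to a triangle, and take the fiber
  obtain ⟨K, k, l, hK⟩ := distinguished_cocone_triangle gb
  set TB : Triangle C := Triangle.mk' (K⟦(-1:ℤ)⟧) BY BZ
    (-l⟦(-1:ℤ)⟧' ≫ (shiftEquiv C (1 : ℤ)).unitIso.inv.app BY) gb
    (k ≫ (shiftEquiv C (1 : ℤ)).counitIso.inv.app K) with hTBdef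
  have hTB : TB ∈ distTriang C := inv_rot_of_distTriang _ hK
  have hp'gb : TB.mor₁ ≫ gb = 0 := comp_distTriang_mor_zero₁₂ _ hTB
  -- fill-in r₀ : X ⟶ TB.obj₁
  obtain ⟨c₀, hc₀₁, hc₀₂⟩ : ∃ c₀ : (X⟦(1:ℤ)⟧ : C) ⟶ (TB.obj₁⟦(1:ℤ)⟧ : C),
      w₀ ≫ c₀ = gZ ≫ TB.mor₃ ∧ (-(u⟦(1:ℤ)⟧')) ≫ gY⟦(1:ℤ)⟧' = c₀ ≫ (-(TB.mor₁⟦(1:ℤ)⟧')) :=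
    complete_distinguished_triangle_morphism
    ((Triangle.mk u v w₀).rotate) (TB.rotate) (rot_of_distTriang _ hT) (rot_of_distTriang _ hTB)
    gY gZ (by exact hgb.symm)
  have hw₀c₀ : w₀ ≫ c₀ = gZ ≫ TB.mor₃ := hc₀₁
  have hc₀₂' : (-(u⟦(1:ℤ)⟧')) ≫ gY⟦(1:ℤ)⟧' = c₀ ≫ (-(TB.mor₁⟦(1:ℤ)⟧')) := hc₀₂
  obtain ⟨r₀, hr₀c⟩ : ∃ r₀ : X ⟶ TB.obj₁, (shiftFunctor C (1:ℤ)).map r₀ = c₀ :=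
    ⟨(shiftFunctor C (1:ℤ)).preimage c₀, (shiftFunctor C (1:ℤ)).map_preimage c₀⟩
  have h_r₀p' : r₀ ≫ TB.mor₁ = u ≫ gY := by
    apply (shiftFunctor C (1:ℤ)).map_injective
    rw [CategoryTheory.Functor.map_comp, CategoryTheory.Functor.map_comp, hr₀c]
    rw [Preadditive.neg_comp, Preadditive.comp_neg, neg_inj] at hc₀₂'
    exact hc₀₂'.symm
  have h_wr₀ : w₀ ≫ r₀⟦(1:ℤ)⟧' = gZ ≫ TB.mor₃ := by rw [hr₀c]; exact hw₀c₀
  -- triangle morphism (r₀, gY, gZ) : (u,v,w₀) ⟶ TB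
  let ψm : Triangle.mk u v w₀ ⟶ TB :=
    { hom₁ := r₀, hom₂ := gY, hom₃ := gZ,
      comm₁ := by exact h_r₀p'.symm,
      comm₂ := by exact hgb.symm,
      comm₃ := by exact h_wr₀ }
  set ρX : (Z⟦(-1:ℤ)⟧ : C) ⟶ X := (Triangle.mk u v w₀).invRotate.mor₁ with hρX
  set νX : (Y⟦(-1:ℤ)⟧ : C) ⟶ (Z⟦(-1:ℤ)⟧ : C) :=
    (Triangle.mk u v w₀).invRotate.invRotate.mor₁ with hνX
  set ρB : (BZ⟦(-1:ℤ)⟧ : C) ⟶ TB.obj₁ := TB.invRotate.mor₁ with hρB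
  set μB : (BY⟦(-1:ℤ)⟧ : C) ⟶ (BZ⟦(-1:ℤ)⟧ : C) := TB.invRotate.invRotate.mor₁ with hμB
  have hsq1 : ρX ≫ r₀ =
      gZ⟦(-1:ℤ)⟧' ≫ ρB := ((invRotate C).map ψm).comm₁
  have hsq2 : νX ≫ gZ⟦(-1:ℤ)⟧' =
      gY⟦(-1:ℤ)⟧' ≫ μB :=
    ((invRotate C).map ((invRotate C).map ψm)).comm₁
  have hνρ : νX ≫
      ρX = 0 :=
    comp_distTriang_mor_zero₁₂ _ (inv_rot_of_distTriang _ (inv_rot_of_distTriang _ hT))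
  -- fX ≫ r₀ = 0
  have hfXr₀ : fX ≫ r₀ = 0 := by
    have h1 : (fX ≫ r₀) ≫ TB.mor₁ = 0 := by
      rw [Category.assoc, h_r₀p']
      rw [← Category.assoc]
      exact vanW w (p := i) (q := i+1) (by omega) hAXw hBYw _
    obtain ⟨e, he⟩ : ∃ e : AX ⟶ (BZ⟦(-1:ℤ)⟧ : C), fX ≫ r₀ = e ≫ ρB :=
      Triangle.coyoneda_exact₂ _ (inv_rot_of_distTriang _ hTB) (fX ≫ r₀)
      (by exact h1)
    have hez : e = 0 := vanT t (p := 0) (q := -1) (by omega)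
      (mem_shiftClass_self hAXh.1)
      (mem_shiftClass_shift' (mem_shiftClass_self hBZh.2) (-1) (by omega)) e
    rw [he, hez, zero_comp]
  -- φ'' : BX ⟶ TB.obj₁ with gX ≫ φ'' = r₀
  obtain ⟨φ0, hφ0⟩ := Triangle.yoneda_exact₂ _ hTX r₀ (by exact hfXr₀)
  have φprop : ∃ φ : BX ⟶ TB.obj₁, r₀ = gX ≫ φ := ⟨φ0, hφ0⟩
  obtain ⟨φ, hφ⟩ := φprop
  -- φ ≫ TB.mor₁ = ga
  have hφp' : φ ≫ TB.mor₁ = ga := by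
    obtain ⟨d, hd⟩ : ∃ d : BX ⟶ BY, d = φ ≫ TB.mor₁ := ⟨φ ≫ TB.mor₁, rfl⟩
    rw [← hd]
    have h1 : gX ≫ (d - ga) = 0 := by
      rw [Preadditive.comp_sub, hd, ← Category.assoc, ← hφ, h_r₀p', hga, sub_self]
    obtain ⟨e, he⟩ := Triangle.yoneda_exact₃ _ hTX (d - ga) (by exact h1)
    have hez : e = 0 := vanT t (p := 1) (q := 0) (by omega)
      (mem_shiftClass_shift' (mem_shiftClass_self hAXh.1) 1 rfl)
      (mem_shiftClass_self hBYh.2) e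
    rw [hez, comp_zero] at he
    exact sub_eq_zero.mp he
  -- injectivity of (r₀ ≫ ·) against heart ∩ wge (i+1)
  have injB : ∀ (W : C), W ∈ t.heart → W ∈ w.wge (i+1) →
      ∀ ε : TB.obj₁ ⟶ W, r₀ ≫ ε = 0 → ε = 0 := by
    intro W hWh hWw ε hε
    -- ρ₀ ≫ ε = 0
    have hρε : ρB ≫ ε = 0 := by
      have h1 : gZ⟦(-1:ℤ)⟧' ≫ (ρB ≫ ε) = 0 := by
        rw [← Category.assoc, ← hsq1, Category.assoc, hε, comp_zero]
      obtain ⟨g, hg⟩ : ∃ g : ((AZ⟦(-1:ℤ)⟧)⟦(1:ℤ)⟧ : C) ⟶ W, ρB ≫ ε =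
          ((-1:ℤ).negOnePow • hZ⟦(-1:ℤ)⟧' ≫ (shiftFunctorComm C 1 (-1)).hom.app AZ) ≫ g :=
        Triangle.yoneda_exact₃ _
        (Triangle.shift_distinguished _ hTZ (-1)) (ρB ≫ ε)
        (by
          show ((-1:ℤ).negOnePow • gZ⟦(-1:ℤ)⟧') ≫ (ρB ≫ ε) = 0
          rw [Linear.units_smul_comp, h1, smul_zero])
      have hgz : g = 0 := vanW w (p := i) (q := i+1) (by omega)
        (mem_shiftClass_shift' (mem_shiftClass_shift' hAZw (-1) rfl) 1 (by omega)) hWw g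
      rw [hg, hgz, comp_zero]
    obtain ⟨ε₂0, hε₂0⟩ := Triangle.yoneda_exact₂ _ (inv_rot_of_distTriang _ hTB) ε
      (by exact hρε)
    have ε₂prop : ∃ ε₂ : BY ⟶ W, ε = TB.mor₁ ≫ ε₂ := ⟨ε₂0, hε₂0⟩
    obtain ⟨ε₂, hε₂⟩ := ε₂prop
    have h2 : u ≫ (gY ≫ ε₂) = 0 := by
      rw [← Category.assoc, ← h_r₀p', Category.assoc, ← hε₂, hε]
    obtain ⟨ξ₃0, hξ₃0⟩ := Triangle.yoneda_exact₂ _ hT (gY ≫ ε₂) (by exact h2)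
    have ξ₃prop : ∃ ξ₃ : Z ⟶ W, gY ≫ ε₂ = v ≫ ξ₃ := ⟨ξ₃0, hξ₃0⟩
    obtain ⟨ξ₃, hξ₃⟩ := ξ₃prop
    have h3 : fZ ≫ ξ₃ = 0 := vanW w (p := i) (q := i+1) (by omega) hAZw hWw _
    obtain ⟨ε₃0, hε₃0⟩ := Triangle.yoneda_exact₂ _ hTZ ξ₃ (by exact h3)
    have ε₃prop : ∃ ε₃ : BZ ⟶ W, ξ₃ = gZ ≫ ε₃ := ⟨ε₃0, hε₃0⟩
    obtain ⟨ε₃, hε₃⟩ := ε₃prop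
    have h4 : gY ≫ (ε₂ - gb ≫ ε₃) = 0 := by
      rw [Preadditive.comp_sub, hξ₃, hε₃, ← Category.assoc, ← Category.assoc, hgb, sub_self]
    obtain ⟨g₄, hg₄⟩ := Triangle.yoneda_exact₃ _ hTY (ε₂ - gb ≫ ε₃) (by exact h4)
    have hg₄z : g₄ = 0 := vanT t (p := 1) (q := 0) (by omega)
      (mem_shiftClass_shift' (mem_shiftClass_self hAYh.1) 1 rfl)
      (mem_shiftClass_self hWh.2) g₄
    rw [hg₄z, comp_zero] at hg₄
    have hε₂' : ε₂ = gb ≫ ε₃ := sub_eq_zero.mp hg₄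
    rw [hε₂, hε₂', ← Category.assoc, hp'gb, zero_comp]
  -- surjectivity : every ζ : X ⟶ W factors through r₀
  have surjB : ∀ (W : C), W ∈ t.heart → W ∈ w.wge (i+1) →
      ∀ ζ : X ⟶ W, ∃ ε₀ : TB.obj₁ ⟶ W, r₀ ≫ ε₀ = ζ := by
    intro W hWh hWw ζ
    have h5 : ((-1:ℤ).negOnePow • fZ⟦(-1:ℤ)⟧') ≫
        (ρX ≫ ζ) = 0 := by
      rw [Linear.units_smul_comp]
      rw [show fZ⟦(-1:ℤ)⟧' ≫ (ρX ≫ ζ) =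
        (fZ⟦(-1:ℤ)⟧' ≫ ρX) ≫ ζ from by
          rw [Category.assoc]]
      have : fZ⟦(-1:ℤ)⟧' ≫ ρX ≫ ζ = 0 :=
        vanW w (p := i + -1) (q := i+1) (by omega)
          (mem_shiftClass_shift' hAZw (-1) rfl) hWw _
      rw [← Category.assoc] at this
      rw [this, smul_zero]
    obtain ⟨m₀, hm₀⟩ : ∃ m₀ : (BZ⟦(-1:ℤ)⟧ : C) ⟶ W,
        ρX ≫ ζ = ((-1:ℤ).negOnePow • gZ⟦(-1:ℤ)⟧') ≫ m₀ := Triangle.yoneda_exact₂ _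
      (Triangle.shift_distinguished _ hTZ (-1)) _ h5
    have mprop : ∃ m : (BZ⟦(-1:ℤ)⟧ : C) ⟶ W,
        ρX ≫ ζ = gZ⟦(-1:ℤ)⟧' ≫ m := by
      refine ⟨(-1:ℤ).negOnePow • m₀, ?_⟩
      rw [Linear.comp_units_smul, ← Linear.units_smul_comp]
      exact hm₀
    obtain ⟨m, hm⟩ := mprop
    -- μ₁ ≫ m = 0
    have hμm : μB ≫ m = 0 := by
      have h6 : gY⟦(-1:ℤ)⟧' ≫ (μB ≫ m) = 0 := by
        rw [← Category.assoc, ← hsq2, Category.assoc, ← hm, ← Category.assoc, hνρ, zero_comp]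
      obtain ⟨g, hg⟩ : ∃ g : ((AY⟦(-1:ℤ)⟧)⟦(1:ℤ)⟧ : C) ⟶ W, μB ≫ m =
          ((-1:ℤ).negOnePow • hY⟦(-1:ℤ)⟧' ≫ (shiftFunctorComm C 1 (-1)).hom.app AY) ≫ g :=
        Triangle.yoneda_exact₃ _
        (Triangle.shift_distinguished _ hTY (-1)) (μB ≫ m)
        (by
          show ((-1:ℤ).negOnePow • gY⟦(-1:ℤ)⟧') ≫ (μB ≫ m) = 0
          rw [Linear.units_smul_comp, h6, smul_zero])
      have hgz : g = 0 := vanW w (p := i) (q := i+1) (by omega)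
        (mem_shiftClass_shift' (mem_shiftClass_shift' hAYw (-1) rfl) 1 (by omega)) hWw g
      rw [hg, hgz, comp_zero]
    obtain ⟨ε₀0, hε₀0⟩ := Triangle.yoneda_exact₂ _
      (inv_rot_of_distTriang _ (inv_rot_of_distTriang _ hTB)) m (by exact hμm)
    have ε₀prop : ∃ ε₀' : TB.obj₁ ⟶ W, m = ρB ≫ ε₀' := ⟨ε₀0, hε₀0⟩
    obtain ⟨ε₀', hε₀'⟩ := ε₀prop
    have h7 : ρX ≫ (ζ - r₀ ≫ ε₀') = 0 := by
      rw [Preadditive.comp_sub, hm, hε₀', ← Category.assoc, ← Category.assoc, hsq1, sub_self]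
    obtain ⟨ξ₁0, hξ₁0⟩ := Triangle.yoneda_exact₂ _ (inv_rot_of_distTriang _ hT) _ (by exact h7)
    have ξ₁prop : ∃ ξ₁ : Y ⟶ W, ζ - r₀ ≫ ε₀' = u ≫ ξ₁ := ⟨ξ₁0, hξ₁0⟩
    obtain ⟨ξ₁, hξ₁⟩ := ξ₁prop
    have h8 : fY ≫ ξ₁ = 0 := vanW w (p := i) (q := i+1) (by omega) hAYw hWw _
    obtain ⟨ε₁0, hε₁0⟩ := Triangle.yoneda_exact₂ _ hTY ξ₁ (by exact h8)
    have ε₁prop : ∃ ε₁ : BY ⟶ W, ξ₁ = gY ≫ ε₁ := ⟨ε₁0, hε₁0⟩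
    obtain ⟨ε₁, hε₁⟩ := ε₁prop
    refine ⟨ε₀' + TB.mor₁ ≫ ε₁, ?_⟩
    rw [Preadditive.comp_add, ← Category.assoc, h_r₀p', Category.assoc, ← hε₁, ← hξ₁]
    abel
  -- χ with r₀ ≫ χ = gX
  obtain ⟨χ, hχ⟩ := surjB BX hBXh hBXw gX
  -- φ ≫ χ = 𝟙 BX
  have hφχ : φ ≫ χ = 𝟙 BX := by
    have h1 : gX ≫ (φ ≫ χ - 𝟙 BX) = 0 := by
      rw [Preadditive.comp_sub, ← Category.assoc, ← hφ, hχ, Category.comp_id, sub_self]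
    obtain ⟨e, he⟩ := Triangle.yoneda_exact₃ _ hTX _ (by exact h1)
    have hez : e = 0 := vanT t (p := 1) (q := 0) (by omega)
      (mem_shiftClass_shift' (mem_shiftClass_self hAXh.1) 1 rfl)
      (mem_shiftClass_self hBXh.2) e
    rw [hez, comp_zero] at he
    exact sub_eq_zero.mp he
  -- TB.obj₁ is in the le-class
  have hQle : TB.obj₁ ∈ shiftClass C t.le 0 := by
    refine le_of_hepi t hTB (by exact mem_shiftClass_self hBYh.1) ?_
    intro W hW ξ hξ
    have hξ' : gb ≫ ξ = 0 := hξ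
    have h1 : v ≫ (gZ ≫ ξ) = 0 := by
      rw [← Category.assoc, ← hgb, Category.assoc, hξ', comp_zero]
    obtain ⟨y₁, hy₁⟩ : ∃ y₁ : (X⟦(1:ℤ)⟧ : C) ⟶ W, gZ ≫ ξ = w₀ ≫ y₁ :=
      Triangle.yoneda_exact₃ _ hT (gZ ≫ ξ) (by exact h1)
    have hy₁z : y₁ = 0 := vanT t (p := 1) (q := 0) (by omega)
      (mem_shiftClass_shift' (mem_shiftClass_self hXh.1) 1 rfl) hW y₁
    have h2 : gZ ≫ ξ = 0 := by rw [hy₁, hy₁z, comp_zero]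
    obtain ⟨y₂, hy₂⟩ : ∃ y₂ : (AZ⟦(1:ℤ)⟧ : C) ⟶ W, ξ = hZ ≫ y₂ :=
      Triangle.yoneda_exact₃ _ hTZ ξ (by exact h2)
    have hy₂z : y₂ = 0 := vanT t (p := 1) (q := 0) (by omega)
      (mem_shiftClass_shift' (mem_shiftClass_self hAZh.1) 1 rfl) hW y₂
    rw [hy₂, hy₂z, comp_zero]
  -- χ ≫ φ = 𝟙
  have hχφ : χ ≫ φ = 𝟙 TB.obj₁ := by
    have hz1 : r₀ ≫ (𝟙 TB.obj₁ - χ ≫ φ) = 0 := by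
      rw [Preadditive.comp_sub, Category.comp_id, ← Category.assoc, hχ, ← hφ, sub_self]
    have hzp : (𝟙 TB.obj₁ - χ ≫ φ) ≫ TB.mor₁ = 0 := by
      apply injB BY hBYh hBYw
      rw [← Category.assoc, hz1, zero_comp]
    obtain ⟨y, hy⟩ : ∃ y : TB.obj₁ ⟶ (BZ⟦(-1:ℤ)⟧ : C), 𝟙 TB.obj₁ - χ ≫ φ = y ≫ ρB :=
      Triangle.coyoneda_exact₂ _ (inv_rot_of_distTriang _ hTB)
      (𝟙 TB.obj₁ - χ ≫ φ) (by exact hzp)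
    have hyz : y = 0 := vanT t (p := 0) (q := -1) (by omega) hQle
      (mem_shiftClass_shift' (mem_shiftClass_self hBZh.2) (-1) (by omega)) y
    rw [hyz, zero_comp, sub_eq_zero] at hy
    exact hy.symm
  have hiso : IsIso φ := ⟨χ, hφχ, hχφ⟩
  -- conclude
  refine ⟨TB.mor₃ ≫ ((inv φ)⟦(1:ℤ)⟧'), isomorphic_distinguished _ hTB _ ?_⟩
  refine Triangle.isoMk _ _ (asIso φ : BX ≅ TB.obj₁) (Iso.refl BY) (Iso.refl BZ) ?_
    (by change gb ≫ 𝟙 BZ = 𝟙 BY ≫ gb; simp) ?_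
  · change ga ≫ 𝟙 BY = φ ≫ TB.mor₁
    rw [Category.comp_id, hφp']
  · change (TB.mor₃ ≫ (inv φ)⟦(1:ℤ)⟧') ≫ φ⟦(1:ℤ)⟧' = 𝟙 BZ ≫ TB.mor₃
    rw [Category.id_comp, Category.assoc, ← CategoryTheory.Functor.map_comp,
      IsIso.inv_hom_id, CategoryTheory.Functor.map_id, Category.comp_id]

end Aux

end WT

namespace WT

namespace Aux

variable {C : Type u} [Category.{v} C] [Preadditive C] [HasZeroObject C]
  [HasShift C ℤ] [∀ n : ℤ, (shiftFunctor C n).Additive] [Pretriangulated C]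
  [HasBinaryBiproducts C]

variable (w : BoundedWeightStructure C) (t : BoundedTStructure C) (i : ℤ)

/-- The data of a chosen nice weight decomposition. -/
structure ND (X : C) where
  A : C
  B : C
  f : A ⟶ X
  g : X ⟶ B
  h : B ⟶ (A⟦(1:ℤ)⟧ : C)
  dist : Triangle.mk f g h ∈ distTriang C
  hAw : A ∈ w.wle i
  hBw : B ∈ w.wge (i+1)
  hAh : A ∈ t.heart
  hBh : B ∈ t.heart

variable (h4 : ConditionIV w t)

/-- A choice of nice weight decomposition for every object of the heart. -/
noncomputable def nd (X : Heart t) : ND w t i X.obj := by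
  have H := h4 X.obj X.property i
  exact ⟨H.choose, H.choose_spec.choose, H.choose_spec.choose_spec.choose,
    H.choose_spec.choose_spec.choose_spec.choose,
    H.choose_spec.choose_spec.choose_spec.choose_spec.choose,
    H.choose_spec.choose_spec.choose_spec.choose_spec.choose_spec.1,
    H.choose_spec.choose_spec.choose_spec.choose_spec.choose_spec.2.1,
    H.choose_spec.choose_spec.choose_spec.choose_spec.choose_spec.2.2.1,
    H.choose_spec.choose_spec.choose_spec.choose_spec.choose_spec.2.2.2.1,
    H.choose_spec.choose_spec.choose_spec.choose_spec.choose_spec.2.2.2.2.2⟩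

variable {w t i}

/-- Universal property: lifting against the weight truncation. -/
lemma lift_ex (X : Heart t) {T : C} (hTh : T ∈ t.heart) (hTw : T ∈ w.wle i)
    (φ : T ⟶ X.obj) :
    ∃! ψ : T ⟶ (nd w t i h4 X).A, ψ ≫ (nd w t i h4 X).f = φ := by
  set D := nd w t i h4 X with hD
  have hφg : φ ≫ D.g = 0 := vanW w (p := i) (q := i+1) (by omega) hTw D.hBw _
  obtain ⟨ψ0, hψ0⟩ := Triangle.coyoneda_exact₂ _ D.dist φ hφg
  have ψprop : ∃ ψ : T ⟶ D.A, φ = ψ ≫ D.f := ⟨ψ0, hψ0⟩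
  obtain ⟨ψ, hψ⟩ := ψprop
  refine ⟨ψ, hψ.symm, ?_⟩
  intro ψ' hψ'
  have h1 : (ψ' - ψ) ≫ D.f = 0 := by
    rw [Preadditive.sub_comp, hψ', ← hψ, sub_self]
  obtain ⟨e, he⟩ := Triangle.coyoneda_exact₂ _ (inv_rot_of_distTriang _ D.dist) (ψ' - ψ)
    (by exact h1)
  have hez : e = 0 := vanT t (p := 0) (q := -1) (by omega)
    (mem_shiftClass_self hTh.1)
    (mem_shiftClass_shift' (mem_shiftClass_self D.hBh.2) (-1) (by omega)) e
  rw [hez, zero_comp] at he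
  exact sub_eq_zero.mp he

/-- Universal property: extending along the weight cotruncation. -/
lemma ext_ex (X : Heart t) {T : C} (hTh : T ∈ t.heart) (hTw : T ∈ w.wge (i+1))
    (φ : X.obj ⟶ T) :
    ∃! ψ : (nd w t i h4 X).B ⟶ T, (nd w t i h4 X).g ≫ ψ = φ := by
  set D := nd w t i h4 X with hD
  have hφf : D.f ≫ φ = 0 := vanW w (p := i) (q := i+1) (by omega) D.hAw hTw _
  obtain ⟨ψ0, hψ0⟩ := Triangle.yoneda_exact₂ _ D.dist φ hφf
  have ψprop : ∃ ψ : D.B ⟶ T, φ = D.g ≫ ψ := ⟨ψ0, hψ0⟩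
  obtain ⟨ψ, hψ⟩ := ψprop
  refine ⟨ψ, hψ.symm, ?_⟩
  intro ψ' hψ'
  have h1 : D.g ≫ (ψ' - ψ) = 0 := by
    rw [Preadditive.comp_sub, hψ', ← hψ, sub_self]
  obtain ⟨e, he⟩ := Triangle.yoneda_exact₃ _ D.dist (ψ' - ψ) (by exact h1)
  have hez : e = 0 := vanT t (p := 1) (q := 0) (by omega)
    (mem_shiftClass_shift' (mem_shiftClass_self D.hAh.1) 1 rfl)
    (mem_shiftClass_self hTh.2) e
  rw [hez, comp_zero] at he
  exact sub_eq_zero.mp he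

variable (w t i)

/-- The weight truncation functor `W_{≤ i}`. -/
@[reducible] noncomputable def WleF : Heart t ⥤ ObjectProperty.FullSubcategory (fun X : C => X ∈ t.heart ∧ X ∈ w.wle i) where
  obj X := ⟨(nd w t i h4 X).A, (nd w t i h4 X).hAh, (nd w t i h4 X).hAw⟩
  map {X Y} u := ObjectProperty.homMk
    (lift_ex h4 Y (nd w t i h4 X).hAh (nd w t i h4 X).hAw ((nd w t i h4 X).f ≫ homC u)).exists.choose
  map_id X := by
    have H := lift_ex h4 X (nd w t i h4 X).hAh (nd w t i h4 X).hAw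
      ((nd w t i h4 X).f ≫ homC (𝟙 X))
    refine ObjectProperty.hom_ext _ (H.unique H.exists.choose_spec ?_)
    show 𝟙 _ ≫ (nd w t i h4 X).f = (nd w t i h4 X).f ≫ homC (𝟙 X)
    rw [Category.id_comp]
    show (nd w t i h4 X).f = (nd w t i h4 X).f ≫ 𝟙 X.obj
    rw [Category.comp_id]
  map_comp {X Y Z} u v := by
    have H := lift_ex h4 Z (nd w t i h4 X).hAh (nd w t i h4 X).hAw
      ((nd w t i h4 X).f ≫ homC (u ≫ v))
    refine ObjectProperty.hom_ext _ (H.unique H.exists.choose_spec ?_)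
    simp only [ObjectProperty.FullSubcategory.comp_hom, ObjectProperty.homMk_hom]
    show (_ ≫ _) ≫ (nd w t i h4 Z).f = (nd w t i h4 X).f ≫ homC (u ≫ v)
    rw [Category.assoc,
      (lift_ex h4 Z (nd w t i h4 Y).hAh (nd w t i h4 Y).hAw
        ((nd w t i h4 Y).f ≫ homC v)).exists.choose_spec,
      ← Category.assoc,
      (lift_ex h4 Y (nd w t i h4 X).hAh (nd w t i h4 X).hAw
        ((nd w t i h4 X).f ≫ homC u)).exists.choose_spec,
      Category.assoc]
    rfl

lemma WleF_map_spec {X Y : Heart t} (u : X ⟶ Y) :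
    homC ((WleF w t i h4).map u) ≫ (nd w t i h4 Y).f = (nd w t i h4 X).f ≫ homC u :=
  (lift_ex h4 Y (nd w t i h4 X).hAh (nd w t i h4 X).hAw
    ((nd w t i h4 X).f ≫ homC u)).exists.choose_spec

/-- The weight cotruncation functor `W_{≥ i+1}`. -/
@[reducible] noncomputable def WgeF :
    Heart t ⥤ ObjectProperty.FullSubcategory (fun X : C => X ∈ t.heart ∧ X ∈ w.wge (i+1)) where
  obj X := ⟨(nd w t i h4 X).B, (nd w t i h4 X).hBh, (nd w t i h4 X).hBw⟩
  map {X Y} u := ObjectProperty.homMk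
    (ext_ex h4 X (nd w t i h4 Y).hBh (nd w t i h4 Y).hBw (homC u ≫ (nd w t i h4 Y).g)).exists.choose
  map_id X := by
    have H := ext_ex h4 X (nd w t i h4 X).hBh (nd w t i h4 X).hBw
      (homC (𝟙 X) ≫ (nd w t i h4 X).g)
    refine ObjectProperty.hom_ext _ (H.unique H.exists.choose_spec ?_)
    show (nd w t i h4 X).g ≫ 𝟙 _ = homC (𝟙 X) ≫ (nd w t i h4 X).g
    rw [Category.comp_id]
    show (nd w t i h4 X).g = 𝟙 _ ≫ (nd w t i h4 X).g
    rw [Category.id_comp]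
  map_comp {X Y Z} u v := by
    have H := ext_ex h4 X (nd w t i h4 Z).hBh (nd w t i h4 Z).hBw
      (homC (u ≫ v) ≫ (nd w t i h4 Z).g)
    refine ObjectProperty.hom_ext _ (H.unique H.exists.choose_spec ?_)
    simp only [ObjectProperty.FullSubcategory.comp_hom, ObjectProperty.homMk_hom]
    show (nd w t i h4 X).g ≫ (_ ≫ _) = homC (u ≫ v) ≫ (nd w t i h4 Z).g
    rw [← Category.assoc,
      (ext_ex h4 X (nd w t i h4 Y).hBh (nd w t i h4 Y).hBw
        (homC u ≫ (nd w t i h4 Y).g)).exists.choose_spec,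
      Category.assoc,
      (ext_ex h4 Y (nd w t i h4 Z).hBh (nd w t i h4 Z).hBw
        (homC v ≫ (nd w t i h4 Z).g)).exists.choose_spec,
      ← Category.assoc]
    rfl

lemma WgeF_map_spec {X Y : Heart t} (u : X ⟶ Y) :
    (nd w t i h4 X).g ≫ homC ((WgeF w t i h4).map u) = homC u ≫ (nd w t i h4 Y).g :=
  (ext_ex h4 X (nd w t i h4 Y).hBh (nd w t i h4 Y).hBw
    (homC u ≫ (nd w t i h4 Y).g)).exists.choose_spec

/-- The hom-set equivalence for `incl ⊣ W_{≤ i}`. -/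
noncomputable def leEquiv (T : ObjectProperty.FullSubcategory (fun X : C => X ∈ t.heart ∧ X ∈ w.wle i))
    (X : Heart t) :
    ((ObjectProperty.ιOfLE (fun X (hX : X ∈ t.heart ∧ X ∈ w.wle i) => hX.1)).obj T ⟶ X) ≃
      (T ⟶ (WleF w t i h4).obj X) where
  toFun φ := ObjectProperty.homMk (lift_ex h4 X T.property.1 T.property.2 (homC φ)).exists.choose
  invFun ψ := ObjectProperty.homMk (homC ψ ≫ (nd w t i h4 X).f : T.obj ⟶ X.obj)
  left_inv φ := ObjectProperty.hom_ext _
    (lift_ex h4 X T.property.1 T.property.2 (homC φ)).exists.choose_spec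
  right_inv ψ := by
    have H := lift_ex h4 X T.property.1 T.property.2 (homC ψ ≫ (nd w t i h4 X).f)
    exact ObjectProperty.hom_ext _ (H.unique H.exists.choose_spec rfl)

/-- The adjunction `incl ⊣ W_{≤ i}`. -/
noncomputable def adjleF :
    ObjectProperty.ιOfLE (fun X (hX : X ∈ t.heart ∧ X ∈ w.wle i) => hX.1) ⊣ WleF w t i h4 :=
  Adjunction.mkOfHomEquiv
    { homEquiv := leEquiv w t i h4
      homEquiv_naturality_left_symm := fun {T' T X} f g => by
        apply ObjectProperty.hom_ext _
        show homC (f ≫ g) ≫ (nd w t i h4 X).f = homC f ≫ (homC g ≫ (nd w t i h4 X).f)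
        show (homC f ≫ homC g) ≫ (nd w t i h4 X).f = homC f ≫ (homC g ≫ (nd w t i h4 X).f)
        rw [Category.assoc]
      homEquiv_naturality_right := fun {T X Y} φ g => by
        apply ObjectProperty.hom_ext _
        show (lift_ex h4 Y T.property.1 T.property.2 (homC (φ ≫ g))).exists.choose =
          (lift_ex h4 X T.property.1 T.property.2 (homC φ)).exists.choose ≫
            homC ((WleF w t i h4).map g)
        have H := lift_ex h4 Y T.property.1 T.property.2 (homC (φ ≫ g))
        refine H.unique H.exists.choose_spec ?_
        show ((lift_ex h4 X T.property.1 T.property.2 (homC φ)).exists.choose ≫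
          homC ((WleF w t i h4).map g)) ≫ (nd w t i h4 Y).f = homC (φ ≫ g)
        have e1 : homC ((WleF w t i h4).map g) ≫ (nd w t i h4 Y).f =
            (nd w t i h4 X).f ≫ homC g := WleF_map_spec w t i h4 g
        have e2 : (lift_ex h4 X T.property.1 T.property.2 (homC φ)).exists.choose ≫
            (nd w t i h4 X).f = homC φ :=
          (lift_ex h4 X T.property.1 T.property.2 (homC φ)).exists.choose_spec
        rw [Category.assoc, e1, ← Category.assoc, e2]
        show homC φ ≫ homC g = homC (φ ≫ g)
        rfl }

/-- The hom-set equivalence for `W_{≥ i+1} ⊣ incl`. -/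
noncomputable def geEquiv (X : Heart t)
    (T : ObjectProperty.FullSubcategory (fun X : C => X ∈ t.heart ∧ X ∈ w.wge (i+1))) :
    ((WgeF w t i h4).obj X ⟶ T) ≃
      (X ⟶ (ObjectProperty.ιOfLE (fun X (hX : X ∈ t.heart ∧ X ∈ w.wge (i+1)) => hX.1)).obj T) where
  toFun ψ := ObjectProperty.homMk ((nd w t i h4 X).g ≫ homC ψ : X.obj ⟶ T.obj)
  invFun φ := ObjectProperty.homMk (ext_ex h4 X T.property.1 T.property.2 (homC φ)).exists.choose
  left_inv ψ := by
    have H := ext_ex h4 X T.property.1 T.property.2 ((nd w t i h4 X).g ≫ homC ψ)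
    exact ObjectProperty.hom_ext _ (H.unique H.exists.choose_spec rfl)
  right_inv φ := ObjectProperty.hom_ext _
    (ext_ex h4 X T.property.1 T.property.2 (homC φ)).exists.choose_spec

/-- The adjunction `W_{≥ i+1} ⊣ incl`. -/
noncomputable def adjgeF :
    WgeF w t i h4 ⊣ ObjectProperty.ιOfLE (fun X (hX : X ∈ t.heart ∧ X ∈ w.wge (i+1)) => hX.1) :=
  Adjunction.mkOfHomEquiv
    { homEquiv := geEquiv w t i h4
      homEquiv_naturality_left_symm := fun {X' X T} f φ => by
        apply ObjectProperty.hom_ext _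
        show (ext_ex h4 X' T.property.1 T.property.2 (homC (f ≫ φ))).exists.choose =
          homC ((WgeF w t i h4).map f) ≫
            (ext_ex h4 X T.property.1 T.property.2 (homC φ)).exists.choose
        have H := ext_ex h4 X' T.property.1 T.property.2 (homC (f ≫ φ))
        refine (H.unique H.exists.choose_spec ?_)
        show (nd w t i h4 X').g ≫ (homC ((WgeF w t i h4).map f) ≫
          (ext_ex h4 X T.property.1 T.property.2 (homC φ)).exists.choose) = homC (f ≫ φ)
        have e1 : (nd w t i h4 X').g ≫ homC ((WgeF w t i h4).map f) =
            homC f ≫ (nd w t i h4 X).g := WgeF_map_spec w t i h4 f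
        have e2 : (nd w t i h4 X).g ≫
            (ext_ex h4 X T.property.1 T.property.2 (homC φ)).exists.choose = homC φ :=
          (ext_ex h4 X T.property.1 T.property.2 (homC φ)).exists.choose_spec
        rw [← Category.assoc, e1, Category.assoc, e2]
        show homC f ≫ homC φ = homC (f ≫ φ)
        rfl
      homEquiv_naturality_right := fun {X T T'} ψ g => by
        apply ObjectProperty.hom_ext _
        show (nd w t i h4 X).g ≫ homC (ψ ≫ g) =
          ((nd w t i h4 X).g ≫ homC ψ) ≫ homC g
        show (nd w t i h4 X).g ≫ (homC ψ ≫ homC g) =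
          ((nd w t i h4 X).g ≫ homC ψ) ≫ homC g
        rw [Category.assoc] }

end Aux

end WT

namespace WT

namespace Aux

variable {C : Type u} [Category.{v} C] [Preadditive C] [HasZeroObject C]
  [HasShift C ℤ] [∀ n : ℤ, (shiftFunctor C n).Additive] [Pretriangulated C]
  [HasBinaryBiproducts C]

variable (w : BoundedWeightStructure C) (t : BoundedTStructure C) (i : ℤ)
variable (h4 : ConditionIV w t)

lemma adjleF_counit_app (X : Heart t) :
    homC ((adjleF w t i h4).counit.app X) = (nd w t i h4 X).f := by
  show homC (𝟙 ((WleF w t i h4).obj X)) ≫ (nd w t i h4 X).f = (nd w t i h4 X).f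
  show 𝟙 ((nd w t i h4 X).A) ≫ (nd w t i h4 X).f = (nd w t i h4 X).f
  rw [Category.id_comp]

lemma adjgeF_unit_app (X : Heart t) :
    homC ((adjgeF w t i h4).unit.app X) = (nd w t i h4 X).g := by
  show (nd w t i h4 X).g ≫ homC (𝟙 ((WgeF w t i h4).obj X)) = (nd w t i h4 X).g
  show (nd w t i h4 X).g ≫ 𝟙 ((nd w t i h4 X).B) = (nd w t i h4 X).g
  rw [Category.comp_id]

theorem WleF_exact :
    HeartExact t (WleF w t i h4 ⋙
      ObjectProperty.ιOfLE (fun X (hX : X ∈ t.heart ∧ X ∈ w.wle i) => hX.1)) := by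
  intro X Y Z f g hses
  obtain ⟨hX, hY, hZ, w₀, hdist⟩ := hses
  have ha := WleF_map_spec w t i h4 f
  have hb := WleF_map_spec w t i h4 g
  obtain ⟨c, hc⟩ := rowA w t i hdist hX hY hZ
    (nd w t i h4 X).dist (nd w t i h4 X).hAw (nd w t i h4 X).hBw
    (nd w t i h4 X).hAh (nd w t i h4 X).hBh
    (nd w t i h4 Y).dist (nd w t i h4 Y).hAw (nd w t i h4 Y).hBw
    (nd w t i h4 Y).hAh (nd w t i h4 Y).hBh
    (nd w t i h4 Z).dist (nd w t i h4 Z).hAw (nd w t i h4 Z).hBw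
    (nd w t i h4 Z).hAh (nd w t i h4 Z).hBh
    ha hb
  exact ⟨(nd w t i h4 X).hAh, (nd w t i h4 Y).hAh, (nd w t i h4 Z).hAh, c, hc⟩

theorem WgeF_exact :
    HeartExact t (WgeF w t i h4 ⋙
      ObjectProperty.ιOfLE (fun X (hX : X ∈ t.heart ∧ X ∈ w.wge (i+1)) => hX.1)) := by
  intro X Y Z f g hses
  obtain ⟨hX, hY, hZ, w₀, hdist⟩ := hses
  have hga := WgeF_map_spec w t i h4 f
  have hgb := WgeF_map_spec w t i h4 g
  obtain ⟨c, hc⟩ := rowB w t i hdist hX hY hZ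
    (nd w t i h4 X).dist (nd w t i h4 X).hAw (nd w t i h4 X).hBw
    (nd w t i h4 X).hAh (nd w t i h4 X).hBh
    (nd w t i h4 Y).dist (nd w t i h4 Y).hAw (nd w t i h4 Y).hBw
    (nd w t i h4 Y).hAh (nd w t i h4 Y).hBh
    (nd w t i h4 Z).dist (nd w t i h4 Z).hAw (nd w t i h4 Z).hBw
    (nd w t i h4 Z).hAh (nd w t i h4 Z).hBh
    hga hgb
  exact ⟨(nd w t i h4 X).hBh, (nd w t i h4 Y).hBh, (nd w t i h4 Z).hBh, c, hc⟩

end Aux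

end WT


namespace WT

variable (C : Type u) [Category.{v} C] [Preadditive C] [HasZeroObject C]
  [HasShift C ℤ] [∀ n : ℤ, (shiftFunctor C n).Additive] [Pretriangulated C]
variable [HasBinaryBiproducts C]

/-- Proposition 1.1(II1, II2): under condition (iv), the inclusion
`Heart(t) ∩ C^{w≤i} → Heart(t)` has a right adjoint `W_{≤i}`, the inclusion
`Heart(t) ∩ C^{w≥i+1} → Heart(t)` has a left adjoint `W_{≥i+1}` given by
`X ↦ X/W_{≤i}X`, and the composites with the inclusions are exact endofunctors of the
heart. -/
theorem weight_filtration_adjoints (w : BoundedWeightStructure C)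
    (t : BoundedTStructure C) (h4 : ConditionIV w t) (i : ℤ) :
    ∃ (Wle : Heart t ⥤ ObjectProperty.FullSubcategory (fun X : C => X ∈ t.heart ∧ X ∈ w.wle i))
      (Wge : Heart t ⥤ ObjectProperty.FullSubcategory (fun X : C => X ∈ t.heart ∧ X ∈ w.wge (i + 1)))
      (adjle : ObjectProperty.ιOfLE (fun X hX => hX.1) ⊣ Wle)
      (adjge : Wge ⊣ ObjectProperty.ιOfLE (fun X hX => hX.1)),
      HeartExact t (Wle ⋙ ObjectProperty.ιOfLE (fun X hX => hX.1)) ∧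
      HeartExact t (Wge ⋙ ObjectProperty.ιOfLE (fun X hX => hX.1)) ∧
      ∀ X : Heart t, HeartSES t (homC (adjle.counit.app X)) (homC (adjge.unit.app X)) := by
  refine ⟨Aux.WleF w t i h4, Aux.WgeF w t i h4, Aux.adjleF w t i h4, Aux.adjgeF w t i h4,
    Aux.WleF_exact w t i h4, Aux.WgeF_exact w t i h4, ?_⟩
  intro X
  rw [Aux.adjleF_counit_app, Aux.adjgeF_unit_app]
  exact ⟨(Aux.nd w t i h4 X).hAh, X.property, (Aux.nd w t i h4 X).hBh,
    (Aux.nd w t i h4 X).h, (Aux.nd w t i h4 X).dist⟩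

end WT
end
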